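/- arXiv:2103.16071 — 5 statements merged into one kernel-verified Lean document; each statement's English description precedes it below -/
import Mathlib

section
/- Let x ∈ ℝᵈ not lie on any of the segments. Then Ẽ(x) ⊆ Ê(x) ⊆ Ẽ^{√n}(x), where Ẽ^{√n}(x) is the homothety of Ẽ(x) about x with ratio √n. -/
noncomputable section

open Metric Set MeasureTheory
open scoped InnerProductSpace Classical

variable {d n : ℕ}

/-- The capsule `C_s(x,r)` induced by a single segment `s = [a,b]` with unit
direction vector `v`.  If the nearest point of `s` to `x` is an endpoint, it is
the closed ball of radius `max r (dist x s)`; otherwise it is the intersection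
of the infinite closed cylinder of radius `max r (dist x s)` whose axis is the
line through `x` parallel to `v` with the closed ball of radius
`max r (min ‖x-a‖ ‖x-b‖)`. -/
def capsuleSeg (a b v x : EuclideanSpace ℝ (Fin d)) (r : ℝ) :
    Set (EuclideanSpace ℝ (Fin d)) :=
  if Metric.infDist x (segment ℝ a b) = min (dist x a) (dist x b) then
    Metric.closedBall x (max r (Metric.infDist x (segment ℝ a b)))
  else
    {y | ‖(y - x) - ⟪y - x, v⟫_ℝ • v‖ ≤ max r (Metric.infDist x (segment ℝ a b))} ∩
      Metric.closedBall x (max r (min (dist x a) (dist x b)))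

/-- The capsule `C(x,r)` of the family of segments `s i = [a i, b i]`. -/
def capsuleFam (a b v : Fin n → EuclideanSpace ℝ (Fin d))
    (x : EuclideanSpace ℝ (Fin d)) (r : ℝ) : Set (EuclideanSpace ℝ (Fin d)) :=
  ⋂ i, capsuleSeg (a i) (b i) (v i) x r

/-- Image of a set under the homothety (central scaling) centered at `x` with ratio `lam`. -/
def scaleAbout (x : EuclideanSpace ℝ (Fin d)) (lam : ℝ)
    (C : Set (EuclideanSpace ℝ (Fin d))) : Set (EuclideanSpace ℝ (Fin d)) :=
  (AffineMap.homothety x lam) '' C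

/-- Local feature size: the distance from `x` to its second-nearest segment. -/
def lfs (a b : Fin n → EuclideanSpace ℝ (Fin d)) (x : EuclideanSpace ℝ (Fin d)) : ℝ :=
  sInf {t | ∃ i j : Fin n, i < j ∧
    t = max (Metric.infDist x (segment ℝ (a i) (b i)))
            (Metric.infDist x (segment ℝ (a j) (b j)))}

/-- `D_i(x)`: half the squared distance from `x` to the segment `[a,b]`. -/
def Dseg (a b x : EuclideanSpace ℝ (Fin d)) : ℝ :=
  Metric.infDist x (segment ℝ a b) ^ 2 / 2

/-- `D•_i(x)`: half the squared distance from `x` to the nearest endpoint. -/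
def Dbullet (a b x : EuclideanSpace ℝ (Fin d)) : ℝ :=
  min (dist x a ^ 2) (dist x b ^ 2) / 2

/-- The quadratic form `w ↦ wᵀ H_i(x) w` of the local tensor
`H_i(x) = (1/D_i(x))(I - v vᵀ) + (1/D•_i(x)) v vᵀ`. -/
def tensorQ (a b v x w : EuclideanSpace ℝ (Fin d)) : ℝ :=
  (1 / Dseg a b x) * (‖w‖ ^ 2 - ⟪w, v⟫_ℝ ^ 2) + (1 / Dbullet a b x) * ⟪w, v⟫_ℝ ^ 2

/-- The local ellipsoid `E_i(x) = {y | ½ (y-x)ᵀ H_i(x) (y-x) ≤ 1}`. -/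
def localEllipsoid (a b v x : EuclideanSpace ℝ (Fin d)) :
    Set (EuclideanSpace ℝ (Fin d)) :=
  {y | tensorQ a b v x (y - x) / 2 ≤ 1}

/-- `Ê(x)`: the intersection of the local ellipsoids of all segments. -/
def hatE (a b v : Fin n → EuclideanSpace ℝ (Fin d)) (x : EuclideanSpace ℝ (Fin d)) :
    Set (EuclideanSpace ℝ (Fin d)) :=
  ⋂ i, localEllipsoid (a i) (b i) (v i) x

/-- `Ẽ(x)`: the ellipsoid of the blended tensor `H(x) = ∑ i, H_i(x)`. -/
def tildeE (a b v : Fin n → EuclideanSpace ℝ (Fin d)) (x : EuclideanSpace ℝ (Fin d)) :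
    Set (EuclideanSpace ℝ (Fin d)) :=
  {y | (∑ i, tensorQ (a i) (b i) (v i) x (y - x)) / 2 ≤ 1}

lemma tensorQ_nonneg {d : ℕ} (a b v x w : EuclideanSpace ℝ (Fin d))
    (hv : ‖v‖ = 1) (hx : x ∉ segment ℝ a b) : 0 ≤ tensorQ a b v x w := by
  have hcl : IsClosed (segment ℝ a b) := by
    rw [segment_eq_image']
    exact (isCompact_Icc.image (by continuity)).isClosed
  have hne : (segment ℝ a b).Nonempty := ⟨a, left_mem_segment ℝ a b⟩
  have hdpos : 0 < Metric.infDist x (segment ℝ a b) :=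
    (hcl.notMem_iff_infDist_pos hne).mp hx
  have hxa : x ≠ a := fun h => hx (h ▸ left_mem_segment ℝ a b)
  have hxb : x ≠ b := fun h => hx (h ▸ right_mem_segment ℝ a b)
  have hD : 0 < Dseg a b x := by
    have := pow_pos hdpos 2
    unfold Dseg; linarith
  have hDb : 0 < Dbullet a b x := by
    have h1 : 0 < dist x a ^ 2 := pow_pos (dist_pos.mpr hxa) 2
    have h2 : 0 < dist x b ^ 2 := pow_pos (dist_pos.mpr hxb) 2
    unfold Dbullet
    have := lt_min h1 h2
    linarith
  have hcs : ⟪w, v⟫_ℝ ^ 2 ≤ ‖w‖ ^ 2 := by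
    have := abs_real_inner_le_norm w v
    rw [hv, mul_one] at this
    calc ⟪w, v⟫_ℝ ^ 2 = |⟪w, v⟫_ℝ| ^ 2 := (sq_abs _).symm
    _ ≤ ‖w‖ ^ 2 := by gcongr
  unfold tensorQ
  have h1 : 0 ≤ (1 / Dseg a b x) * (‖w‖ ^ 2 - ⟪w, v⟫_ℝ ^ 2) :=
    mul_nonneg (by positivity) (by linarith)
  have h2 : 0 ≤ (1 / Dbullet a b x) * ⟪w, v⟫_ℝ ^ 2 := by positivity
  linarith

lemma tensorQ_smul {d : ℕ} (a b v x w : EuclideanSpace ℝ (Fin d)) (c : ℝ) :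
    tensorQ a b v x (c • w) = c ^ 2 * tensorQ a b v x w := by
  unfold tensorQ
  rw [norm_smul, real_inner_smul_left]
  simp [mul_pow]
  ring

/-- For `x` not on any segment,
`Ẽ(x) ⊆ Ê(x) ⊆ Ẽ^{√n}(x)`. -/
theorem tildeE_subset_hatE_subset_scaled_tildeE {d n : ℕ} (hd : 1 ≤ d) (hn : 1 ≤ n)
    (a b v : Fin n → EuclideanSpace ℝ (Fin d))
    (hab : ∀ i, a i ≠ b i)
    (hv : ∀ i, ‖v i‖ = 1)
    (hdir : ∀ i, b i - a i = ‖b i - a i‖ • v i)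
    (hdisj : ∀ i j, i ≠ j → Disjoint (segment ℝ (a i) (b i)) (segment ℝ (a j) (b j)))
    (x : EuclideanSpace ℝ (Fin d)) (hx : ∀ i, x ∉ segment ℝ (a i) (b i)) :
    tildeE a b v x ⊆ hatE a b v x ∧
      hatE a b v x ⊆ scaleAbout x (Real.sqrt n) (tildeE a b v x) := by
  have hQnn : ∀ i (w : EuclideanSpace ℝ (Fin d)), 0 ≤ tensorQ (a i) (b i) (v i) x w :=
    fun i w => tensorQ_nonneg _ _ _ _ _ (hv i) (hx i)
  constructor
  · intro y hy
    simp only [tildeE, mem_setOf_eq] at hy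
    simp only [hatE, mem_iInter, localEllipsoid, mem_setOf_eq]
    intro i
    have hle : tensorQ (a i) (b i) (v i) x (y - x) ≤
        ∑ j, tensorQ (a j) (b j) (v j) x (y - x) :=
      Finset.single_le_sum (fun j _ => hQnn j _) (Finset.mem_univ i)
    linarith
  · intro y hy
    simp only [hatE, mem_iInter, localEllipsoid, mem_setOf_eq] at hy
    have hnpos : (0 : ℝ) < n := by exact_mod_cast hn
    have hs : (0 : ℝ) < Real.sqrt n := Real.sqrt_pos.mpr hnpos
    refine ⟨x + (Real.sqrt n)⁻¹ • (y - x), ?_, ?_⟩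
    · simp only [tildeE, mem_setOf_eq, add_sub_cancel_left]
      have hsum : ∑ j, tensorQ (a j) (b j) (v j) x ((Real.sqrt n)⁻¹ • (y - x))
          = ((Real.sqrt n)⁻¹) ^ 2 * ∑ j, tensorQ (a j) (b j) (v j) x (y - x) := by
        rw [Finset.mul_sum]
        exact Finset.sum_congr rfl fun j _ => tensorQ_smul _ _ _ _ _ _
      rw [hsum]
      have hsq : ((Real.sqrt n)⁻¹) ^ 2 = (n : ℝ)⁻¹ := by
        rw [inv_pow, Real.sq_sqrt hnpos.le]
      rw [hsq]
      have hb : ∑ j, tensorQ (a j) (b j) (v j) x (y - x) ≤ 2 * n := by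
        calc ∑ j, tensorQ (a j) (b j) (v j) x (y - x)
            ≤ ∑ _j : Fin n, (2 : ℝ) := Finset.sum_le_sum fun j _ => by
              have := hy j; linarith
          _ = 2 * n := by simp [mul_comm]
      rw [div_le_one (by norm_num : (0:ℝ) < 2)] at *
      calc (n : ℝ)⁻¹ * ∑ j, tensorQ (a j) (b j) (v j) x (y - x)
          ≤ (n : ℝ)⁻¹ * (2 * n) := by
            apply mul_le_mul_of_nonneg_left hb (by positivity)
        _ = 2 := by field_simp
    · simp only [AffineMap.homothety_apply, vsub_eq_sub, vadd_eq_add,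
        add_sub_cancel_right, add_sub_cancel_left]
      rw [smul_smul, mul_inv_cancel₀ (ne_of_gt hs), one_smul]
      abel
end
end

section
/- Fix one segment s_i of S, a point x ∈ ℝᵈ not lying on s_i, and a real number r with 0 < r ≤ dist(x, s_i). Then E_i(x) ⊆ C_{s_i}(x, r) ⊆ E_i^{√2}(x), where E_i^{√2}(x) is the homothety of E_i(x) about x with ratio √2. -/
noncomputable section

open Metric Set MeasureTheory
open scoped InnerProductSpace Classical

variable {d n : ℕ}

/-- For a single segment `s_i = [a,b]`, a point `x` not on it,
and `0 < r ≤ dist(x, s_i)`, `E_i(x) ⊆ C_{s_i}(x, r) ⊆ E_i^{√2}(x)`. -/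
theorem localEllipsoid_subset_capsuleSeg_subset_scaled {d : ℕ} (hd : 1 ≤ d)
    (a b v : EuclideanSpace ℝ (Fin d))
    (hab : a ≠ b)
    (hv : ‖v‖ = 1)
    (hdir : b - a = ‖b - a‖ • v)
    (x : EuclideanSpace ℝ (Fin d)) (hx : x ∉ segment ℝ a b)
    (r : ℝ) (hr0 : 0 < r) (hr : r ≤ Metric.infDist x (segment ℝ a b)) :
    localEllipsoid a b v x ⊆ capsuleSeg a b v x r ∧
      capsuleSeg a b v x r ⊆ scaleAbout x (Real.sqrt 2) (localEllipsoid a b v x) := by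
  have hseg : IsClosed (segment ℝ a b) := by
    rw [segment_eq_image ℝ a b]
    exact ((isCompact_Icc).image (by fun_prop)).isClosed
  have hne : (segment ℝ a b).Nonempty := ⟨a, left_mem_segment ℝ a b⟩
  set D := Metric.infDist x (segment ℝ a b) with hD
  set m := min (dist x a) (dist x b) with hm
  have hDpos : 0 < D := by
    rw [hD]
    exact (hseg.notMem_iff_infDist_pos hne).mp hx
  have hDa : D ≤ dist x a := Metric.infDist_le_dist_of_mem (left_mem_segment ℝ a b)
  have hDb : D ≤ dist x b := Metric.infDist_le_dist_of_mem (right_mem_segment ℝ a b)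
  have hDm : D ≤ m := le_min hDa hDb
  have hmpos : 0 < m := lt_of_lt_of_le hDpos hDm
  have hmaxr : max r D = D := max_eq_right hr
  have hmaxm : max r m = m := max_eq_right (hr.trans hDm)
  have hD2 : (D:ℝ)^2 ≠ 0 := by positivity
  have hm2 : (m:ℝ)^2 ≠ 0 := by positivity
  have hDbul : Dbullet a b x = m^2/2 := by
    rcases le_total (dist x a) (dist x b) with h | h
    · have h2 : dist x a ^ 2 ≤ dist x b ^ 2 := pow_le_pow_left₀ dist_nonneg h 2
      simp [Dbullet, hm, min_eq_left h, min_eq_left h2]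
    · have h2 : dist x b ^ 2 ≤ dist x a ^ 2 := pow_le_pow_left₀ dist_nonneg h 2
      simp [Dbullet, hm, min_eq_right h, min_eq_right h2]
  have key : ∀ w : EuclideanSpace ℝ (Fin d),
      ‖w - ⟪w, v⟫_ℝ • v‖^2 = ‖w‖^2 - ⟪w, v⟫_ℝ^2 := by
    intro w
    rw [norm_sub_sq_real, real_inner_smul_right, norm_smul]
    simp [hv, real_inner_self_eq_norm_sq, sq_abs]
    ring
  have hAnn : ∀ w : EuclideanSpace ℝ (Fin d), 0 ≤ ‖w‖^2 - ⟪w, v⟫_ℝ^2 := by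
    intro w; rw [← key w]; positivity
  have hform : ∀ w : EuclideanSpace ℝ (Fin d), tensorQ a b v x w / 2
      = (‖w‖^2 - ⟪w, v⟫_ℝ^2)/D^2 + ⟪w, v⟫_ℝ^2/m^2 := by
    intro w
    rw [tensorQ, hDbul]
    have : Dseg a b x = D^2/2 := by rw [Dseg, hD]
    rw [this]
    field_simp
  have hQscale : ∀ (c : ℝ) (w : EuclideanSpace ℝ (Fin d)),
      tensorQ a b v x (c • w) = c^2 * tensorQ a b v x w := by
    intro c w
    simp only [tensorQ, norm_smul, real_inner_smul_left, mul_pow, sq_abs, Real.norm_eq_abs]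
    ring
  have sqrt2_pos : (0:ℝ) < Real.sqrt 2 := Real.sqrt_pos.mpr (by norm_num)
  -- membership in the scaled ellipsoid from a bound on the quadratic form
  have hmem_scale : ∀ y : EuclideanSpace ℝ (Fin d),
      tensorQ a b v x (y - x) ≤ 4 → y ∈ scaleAbout x (Real.sqrt 2) (localEllipsoid a b v x) := by
    intro y hQ
    refine ⟨x + (Real.sqrt 2)⁻¹ • (y - x), ?_, ?_⟩
    · show tensorQ a b v x (x + (Real.sqrt 2)⁻¹ • (y - x) - x) / 2 ≤ 1
      rw [add_sub_cancel_left, hQscale]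
      have h12 : (Real.sqrt 2)⁻¹ ^ 2 = 1/2 := by
        rw [inv_pow, Real.sq_sqrt (by norm_num : (0:ℝ) ≤ 2)]; norm_num
      rw [h12]; linarith
    · rw [AffineMap.homothety_apply]
      simp only [vsub_eq_sub, vadd_eq_add, add_sub_cancel_left]
      rw [smul_smul, mul_inv_cancel₀ (ne_of_gt sqrt2_pos), one_smul, sub_add_cancel]
  constructor
  · -- E ⊆ capsule
    intro y hy
    set w := y - x with hw
    set p := ⟪w, v⟫_ℝ with hp
    have hy' : (‖w‖^2 - p^2)/D^2 + p^2/m^2 ≤ 1 := by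
      rw [← hform]; exact hy
    have hBnn : (0:ℝ) ≤ p^2 := sq_nonneg p
    have hA1 : (‖w‖^2 - p^2)/D^2 ≤ 1 := by
      have := div_nonneg hBnn (sq_nonneg m); linarith
    have hA' : ‖w‖^2 - p^2 ≤ D^2 := (div_le_one (by positivity)).mp hA1
    have hAm : (‖w‖^2 - p^2)/m^2 ≤ (‖w‖^2 - p^2)/D^2 := by
      apply div_le_div_of_nonneg_left (hAnn w) (by positivity)
      exact pow_le_pow_left₀ hDpos.le hDm 2
    have hw2 : ‖w‖^2 ≤ m^2 := by
      have h1 : (‖w‖^2 - p^2)/m^2 + p^2/m^2 ≤ 1 := by linarith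
      have h2 : ‖w‖^2/m^2 ≤ 1 := by
        rw [show ‖w‖^2 = (‖w‖^2 - p^2) + p^2 by ring, add_div]; exact h1
      exact (div_le_one (by positivity)).mp h2
    have hwm : ‖w‖ ≤ m := by
      have h := Real.sqrt_le_sqrt hw2
      rwa [Real.sqrt_sq (norm_nonneg w), Real.sqrt_sq hmpos.le] at h
    by_cases hcase : D = m
    · rw [capsuleSeg, if_pos (by rw [← hD, ← hm]; exact hcase), ← hD, hmaxr]
      rw [Metric.mem_closedBall, dist_eq_norm]
      rw [hcase]; exact hwm
    · rw [capsuleSeg, if_neg (by rw [← hD, ← hm]; exact hcase), ← hD, ← hm, hmaxr, hmaxm]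
      constructor
      · show ‖(y - x) - ⟪y - x, v⟫_ℝ • v‖ ≤ D
        rw [← hw, ← hp]
        have h1 : ‖w - p • v‖^2 ≤ D^2 := by rw [hp, key w]; exact hA'
        have h2 := Real.sqrt_le_sqrt h1
        rwa [Real.sqrt_sq (norm_nonneg _), Real.sqrt_sq hDpos.le] at h2
      · rw [Metric.mem_closedBall, dist_eq_norm]; exact hwm
  · -- capsule ⊆ √2 E
    intro y hy
    set w := y - x with hw
    set p := ⟪w, v⟫_ℝ with hp
    have hpw : |p| ≤ ‖w‖ := by
      have := abs_real_inner_le_norm w v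
      rwa [hv, mul_one] at this
    -- From the capsule membership, derive the two bounds
    have hbounds : ‖w‖^2 - p^2 ≤ D^2 ∧ ‖w‖ ≤ m := by
      by_cases hcase : D = m
      · rw [capsuleSeg, if_pos (by rw [← hD, ← hm]; exact hcase), ← hD, hmaxr] at hy
        rw [Metric.mem_closedBall, dist_eq_norm, ← hw] at hy
        have h2 : ‖w‖^2 ≤ D^2 := pow_le_pow_left₀ (norm_nonneg w) hy 2
        constructor
        · have := sq_nonneg p; linarith
        · rw [← hcase]; exact hy
      · rw [capsuleSeg, if_neg (by rw [← hD, ← hm]; exact hcase), ← hD, ← hm, hmaxr, hmaxm] at hy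
        obtain ⟨h1, h2⟩ := hy
        rw [Metric.mem_closedBall, dist_eq_norm, ← hw] at h2
        constructor
        · have h1' : ‖w - p • v‖ ≤ D := by rw [hw, hp]; exact h1
          have h2 := pow_le_pow_left₀ (norm_nonneg (w - p • v)) h1' 2
          rw [key w] at h2; exact h2
        · exact h2
    obtain ⟨hA', hwm⟩ := hbounds
    apply hmem_scale
    have hp2 : p^2 ≤ m^2 := by
      have h := pow_le_pow_left₀ (abs_nonneg p) (hpw.trans hwm) 2
      rwa [sq_abs] at h
    have h1 : (‖w‖^2 - p^2)/D^2 ≤ 1 := (div_le_one (by positivity)).mpr hA'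
    have h2 : p^2/m^2 ≤ 1 := (div_le_one (by positivity)).mpr hp2
    have : tensorQ a b v x w / 2 ≤ 2 := by rw [hform]; linarith
    rw [← hw]; linarith
end
end

section
/- (Expansion-Containment) Let r > 0 and 0 < λ < 1, and set α = (3+λ)/(1−λ). For any x, y ∈ ℝᵈ, if C^λ(x, r) ∩ C^λ(y, r) ≠ ∅, then C^λ(y, r) ⊆ C^{αλ}(x, r). -/
noncomputable section

open Metric Set MeasureTheory
open scoped InnerProductSpace Classical

variable {d n : ℕ}

namespace CapsuleAux

variable {d : ℕ}

/-- helper: from `a² ≤ b²` and `0 ≤ b` conclude `a ≤ b`. -/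
lemma le_of_sq_le_sq {a b : ℝ} (hb : 0 ≤ b) (h : a ^ 2 ≤ b ^ 2) : a ≤ b := by
  nlinarith [sq_nonneg (a - b), sq_nonneg (a + b)]

lemma le_infDist' {s : Set (EuclideanSpace ℝ (Fin d))} (hs : s.Nonempty)
    {x : EuclideanSpace ℝ (Fin d)} {c : ℝ} (h : ∀ y ∈ s, c ≤ dist x y) :
    c ≤ Metric.infDist x s := by
  by_contra hc
  push_neg at hc
  obtain ⟨y, hy, hlt⟩ := (Metric.infDist_lt_iff hs).1 hc
  exact absurd (h y hy) (not_le.2 hlt)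

/-- The component of `w` orthogonal to `v`. -/
def pperp (v w : EuclideanSpace ℝ (Fin d)) : EuclideanSpace ℝ (Fin d) :=
  w - ⟪w, v⟫_ℝ • v

lemma pperp_add (v w₁ w₂ : EuclideanSpace ℝ (Fin d)) :
    pperp v (w₁ + w₂) = pperp v w₁ + pperp v w₂ := by
  simp only [pperp, inner_add_left, add_smul]; abel

lemma pperp_smul (v w : EuclideanSpace ℝ (Fin d)) (c : ℝ) :
    pperp v (c • w) = c • pperp v w := by
  simp only [pperp, real_inner_smul_left, smul_sub, smul_smul]

lemma norm_pperp_sub_rev (v w₁ w₂ : EuclideanSpace ℝ (Fin d)) :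
    ‖pperp v (w₁ - w₂)‖ = ‖pperp v (w₂ - w₁)‖ := by
  have : w₁ - w₂ = (-1 : ℝ) • (w₂ - w₁) := by simp
  rw [this, pperp_smul, norm_smul]; simp

lemma inner_pperp_right {v : EuclideanSpace ℝ (Fin d)} (hv : ‖v‖ = 1)
    (w : EuclideanSpace ℝ (Fin d)) : ⟪pperp v w, v⟫_ℝ = 0 := by
  have hvv : ⟪v, v⟫_ℝ = 1 := by rw [real_inner_self_eq_norm_sq, hv]; norm_num
  rw [pperp, inner_sub_left, real_inner_smul_left, hvv, mul_one, sub_self]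

lemma normsq_split {v : EuclideanSpace ℝ (Fin d)} (hv : ‖v‖ = 1)
    (w : EuclideanSpace ℝ (Fin d)) :
    ‖w‖ ^ 2 = ‖pperp v w‖ ^ 2 + ⟪w, v⟫_ℝ ^ 2 := by
  have h : w = pperp v w + ⟪w, v⟫_ℝ • v := by simp [pperp]
  calc ‖w‖ ^ 2 = ‖pperp v w + ⟪w, v⟫_ℝ • v‖ ^ 2 := by rw [← h]
    _ = ‖pperp v w‖ ^ 2 + 2 * ⟪pperp v w, ⟪w, v⟫_ℝ • v⟫_ℝ + ‖⟪w, v⟫_ℝ • v‖ ^ 2 :=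
        norm_add_sq_real _ _
    _ = ‖pperp v w‖ ^ 2 + ⟪w, v⟫_ℝ ^ 2 := by
        rw [real_inner_smul_right, inner_pperp_right hv, norm_smul, hv, Real.norm_eq_abs]
        rw [mul_one, sq_abs]; ring

lemma norm_pperp_le {v : EuclideanSpace ℝ (Fin d)} (hv : ‖v‖ = 1)
    (w : EuclideanSpace ℝ (Fin d)) : ‖pperp v w‖ ≤ ‖w‖ := by
  apply le_of_sq_le_sq (norm_nonneg _)
  rw [normsq_split hv w]; nlinarith [sq_nonneg ⟪w, v⟫_ℝ]


section Seg

variable {a b v : EuclideanSpace ℝ (Fin d)}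

lemma seg_param (hdir : b - a = ‖b - a‖ • v) {s : EuclideanSpace ℝ (Fin d)}
    (hs : s ∈ segment ℝ a b) :
    ∃ t : ℝ, 0 ≤ t ∧ t ≤ ‖b - a‖ ∧ s = a + t • v := by
  set L := ‖b - a‖ with hLdef
  rw [segment_eq_image'] at hs
  obtain ⟨θ, ⟨hθ0, hθ1⟩, rfl⟩ := hs
  have hL0 : 0 ≤ L := by rw [hLdef]; exact norm_nonneg _
  refine ⟨θ * L, by positivity, by nlinarith, ?_⟩
  show a + θ • (b - a) = a + (θ * L) • v
  rw [hdir, smul_smul]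

lemma param_mem_seg (hdir : b - a = ‖b - a‖ • v) (hab : a ≠ b) {t : ℝ}
    (h0 : 0 ≤ t) (hL : t ≤ ‖b - a‖) : a + t • v ∈ segment ℝ a b := by
  set L := ‖b - a‖ with hLdef
  have hLpos : 0 < L := by
    rw [hLdef, norm_pos_iff, sub_ne_zero]; exact fun h => hab h.symm
  rw [segment_eq_image']
  refine ⟨t / L, ⟨by positivity, by rw [div_le_one hLpos]; exact hL⟩, ?_⟩
  show a + (t / L) • (b - a) = a + t • v
  rw [hdir, smul_smul, div_mul_cancel₀ _ hLpos.ne']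

lemma dist_param_sq (hv : ‖v‖ = 1) (u : EuclideanSpace ℝ (Fin d)) (t : ℝ) :
    dist u (a + t • v) ^ 2 = ‖pperp v (u - a)‖ ^ 2 + (⟪u - a, v⟫_ℝ - t) ^ 2 := by
  have h1 : u - (a + t • v) = pperp v (u - a) + (⟪u - a, v⟫_ℝ - t) • v := by
    rw [pperp, sub_smul]; abel
  rw [dist_eq_norm, h1]
  calc ‖pperp v (u - a) + (⟪u - a, v⟫_ℝ - t) • v‖ ^ 2
      = ‖pperp v (u - a)‖ ^ 2 + 2 * ⟪pperp v (u - a), (⟪u - a, v⟫_ℝ - t) • v⟫_ℝ +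
        ‖(⟪u - a, v⟫_ℝ - t) • v‖ ^ 2 := norm_add_sq_real _ _
    _ = ‖pperp v (u - a)‖ ^ 2 + (⟪u - a, v⟫_ℝ - t) ^ 2 := by
        rw [real_inner_smul_right, inner_pperp_right hv, norm_smul, hv, Real.norm_eq_abs,
          mul_one, sq_abs]; ring

lemma dist_a_sq (hv : ‖v‖ = 1) (u : EuclideanSpace ℝ (Fin d)) :
    dist u a ^ 2 = ‖pperp v (u - a)‖ ^ 2 + ⟪u - a, v⟫_ℝ ^ 2 := by
  have := dist_param_sq (a := a) hv u 0
  simpa using this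

lemma dist_b_sq (hv : ‖v‖ = 1) (hdir : b - a = ‖b - a‖ • v)
    (u : EuclideanSpace ℝ (Fin d)) :
    dist u b ^ 2 = ‖pperp v (u - a)‖ ^ 2 + (⟪u - a, v⟫_ℝ - ‖b - a‖) ^ 2 := by
  have hb : b = a + ‖b - a‖ • v := by rw [← hdir]; abel
  rw [← dist_param_sq hv u ‖b - a‖, ← hb]

lemma Q_le_ds (hv : ‖v‖ = 1) (hdir : b - a = ‖b - a‖ • v)
    (u : EuclideanSpace ℝ (Fin d)) :
    ‖pperp v (u - a)‖ ≤ Metric.infDist u (segment ℝ a b) := by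
  apply le_infDist' ⟨a, left_mem_segment ℝ a b⟩
  intro s hs
  obtain ⟨t, _, _, rfl⟩ := seg_param hdir hs
  apply le_of_sq_le_sq dist_nonneg
  rw [dist_param_sq hv u t]
  nlinarith [sq_nonneg (⟪u - a, v⟫_ℝ - t)]

lemma ds_le_min (u : EuclideanSpace ℝ (Fin d)) :
    Metric.infDist u (segment ℝ a b) ≤ min (dist u a) (dist u b) :=
  le_min (Metric.infDist_le_dist_of_mem (left_mem_segment ℝ a b))
    (Metric.infDist_le_dist_of_mem (right_mem_segment ℝ a b))

/-- In the cylinder case, the projection parameter lies in `[0, L]` and the distance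
to the segment is the distance to the axis line. -/
lemma cyl_case (hv : ‖v‖ = 1) (hdir : b - a = ‖b - a‖ • v) (hab : a ≠ b)
    (u : EuclideanSpace ℝ (Fin d))
    (h : Metric.infDist u (segment ℝ a b) ≠ min (dist u a) (dist u b)) :
    0 ≤ ⟪u - a, v⟫_ℝ ∧ ⟪u - a, v⟫_ℝ ≤ ‖b - a‖ ∧
      Metric.infDist u (segment ℝ a b) = ‖pperp v (u - a)‖ := by
  have hLpos : 0 < ‖b - a‖ := by
    rw [norm_pos_iff, sub_ne_zero]; exact fun h' => hab h'.symm
  set τ := ⟪u - a, v⟫_ℝ with hτ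
  set Q := ‖pperp v (u - a)‖ with hQdef
  have hτ0 : 0 ≤ τ := by
    by_contra hτneg
    push_neg at hτneg
    have h1 : ∀ s ∈ segment ℝ a b, dist u a ≤ dist u s := by
      intro s hs
      obtain ⟨t, ht0, _, rfl⟩ := seg_param hdir hs
      apply le_of_sq_le_sq dist_nonneg
      rw [dist_param_sq hv u t, dist_a_sq (a := a) hv u]
      nlinarith
    have h2 : Metric.infDist u (segment ℝ a b) = dist u a :=
      le_antisymm (Metric.infDist_le_dist_of_mem (left_mem_segment ℝ a b))
        (le_infDist' ⟨a, left_mem_segment ℝ a b⟩ h1)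
    have h3 : dist u a ≤ dist u b := by
      apply le_of_sq_le_sq dist_nonneg
      rw [dist_b_sq hv hdir u, dist_a_sq (a := a) hv u]
      nlinarith
    exact h (by rw [h2, min_eq_left h3])
  have hτL : τ ≤ ‖b - a‖ := by
    by_contra hτbig
    push_neg at hτbig
    have h1 : ∀ s ∈ segment ℝ a b, dist u b ≤ dist u s := by
      intro s hs
      obtain ⟨t, ht0, htL, rfl⟩ := seg_param hdir hs
      apply le_of_sq_le_sq dist_nonneg
      rw [dist_param_sq hv u t, dist_b_sq hv hdir u]
      nlinarith
    have h2 : Metric.infDist u (segment ℝ a b) = dist u b :=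
      le_antisymm (Metric.infDist_le_dist_of_mem (right_mem_segment ℝ a b))
        (le_infDist' ⟨a, left_mem_segment ℝ a b⟩ h1)
    have h3 : dist u b ≤ dist u a := by
      apply le_of_sq_le_sq dist_nonneg
      rw [dist_b_sq hv hdir u, dist_a_sq (a := a) hv u]
      nlinarith
    exact h (by rw [h2, min_eq_right h3])
  refine ⟨hτ0, hτL, le_antisymm ?_ (Q_le_ds hv hdir u)⟩
  have hmem : a + τ • v ∈ segment ℝ a b := param_mem_seg hdir hab hτ0 hτL
  have hdistsq : dist u (a + τ • v) ^ 2 = Q ^ 2 := by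
    rw [dist_param_sq hv u τ, ← hτ, ← hQdef, sub_self]
    norm_num
  have hdist : dist u (a + τ • v) = Q :=
    le_antisymm (le_of_sq_le_sq (by rw [hQdef]; exact norm_nonneg _) hdistsq.le)
      (le_of_sq_le_sq dist_nonneg hdistsq.ge)
  calc Metric.infDist u (segment ℝ a b) ≤ dist u (a + τ • v) :=
        Metric.infDist_le_dist_of_mem hmem
    _ = Q := hdist

end Seg


section Capsule

variable {a b v x : EuclideanSpace ℝ (Fin d)}

lemma capsuleSeg_eq (hv : ‖v‖ = 1) (a b : EuclideanSpace ℝ (Fin d))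
    (x : EuclideanSpace ℝ (Fin d)) (r : ℝ) :
    capsuleSeg a b v x r =
      {p | ‖pperp v (p - x)‖ ≤ max r (Metric.infDist x (segment ℝ a b)) ∧
        ‖p - x‖ ≤ max r (min (dist x a) (dist x b))} := by
  unfold capsuleSeg
  split_ifs with hx
  · ext p
    simp only [mem_closedBall, dist_eq_norm, mem_setOf_eq, hx]
    constructor
    · intro hp
      exact ⟨le_trans (norm_pperp_le hv _) hp, hp⟩
    · exact fun hp => hp.2
  · ext p
    simp only [mem_inter_iff, mem_setOf_eq, mem_closedBall, dist_eq_norm, pperp]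

lemma mem_scaleAbout_capsuleSeg (hv : ‖v‖ = 1) {r mu : ℝ} (hmu : 0 < mu)
    (p : EuclideanSpace ℝ (Fin d)) :
    p ∈ scaleAbout x mu (capsuleSeg a b v x r) ↔
      ‖pperp v (p - x)‖ ≤ mu * max r (Metric.infDist x (segment ℝ a b)) ∧
      ‖p - x‖ ≤ mu * max r (min (dist x a) (dist x b)) := by
  rw [capsuleSeg_eq hv]
  unfold scaleAbout
  constructor
  · rintro ⟨c, ⟨hc1, hc2⟩, rfl⟩
    rw [AffineMap.homothety_apply]
    simp only [vsub_eq_sub, vadd_eq_add]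
    have hsub : mu • (c - x) + x - x = mu • (c - x) := by abel
    rw [hsub, pperp_smul, norm_smul, norm_smul, Real.norm_eq_abs, abs_of_pos hmu]
    exact ⟨mul_le_mul_of_nonneg_left hc1 hmu.le, mul_le_mul_of_nonneg_left hc2 hmu.le⟩
  · rintro ⟨hp1, hp2⟩
    have hsub : x + mu⁻¹ • (p - x) - x = mu⁻¹ • (p - x) := by abel
    refine ⟨x + mu⁻¹ • (p - x), ⟨?_, ?_⟩, ?_⟩
    · rw [hsub, pperp_smul, norm_smul, Real.norm_eq_abs, abs_of_pos (inv_pos.2 hmu)]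
      calc mu⁻¹ * ‖pperp v (p - x)‖
          ≤ mu⁻¹ * (mu * max r (Metric.infDist x (segment ℝ a b))) :=
            mul_le_mul_of_nonneg_left hp1 (inv_pos.2 hmu).le
        _ = max r (Metric.infDist x (segment ℝ a b)) := by field_simp
    · rw [hsub, norm_smul, Real.norm_eq_abs, abs_of_pos (inv_pos.2 hmu)]
      calc mu⁻¹ * ‖p - x‖
          ≤ mu⁻¹ * (mu * max r (min (dist x a) (dist x b))) :=
            mul_le_mul_of_nonneg_left hp2 (inv_pos.2 hmu).le
        _ = max r (min (dist x a) (dist x b)) := by field_simp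
    · rw [AffineMap.homothety_apply]
      simp only [vsub_eq_sub, vadd_eq_add]
      rw [hsub, smul_smul, mul_inv_cancel₀ hmu.ne', one_smul]
      abel

end Capsule


section ArithHelpers

private lemma expandArith {lam A B : ℝ} (hl0 : 0 < lam) (hl1 : lam < 1)
    (h : (1 - lam) * B ≤ (1 + lam) * A) :
    lam * B + lam * B + lam * A ≤ (3 + lam) / (1 - lam) * lam * A := by
  rw [div_mul_eq_mul_div, div_mul_eq_mul_div, le_div_iff₀ (by linarith : (0:ℝ) < 1 - lam)]
  nlinarith [mul_le_mul_of_nonneg_left h (by linarith : (0:ℝ) ≤ 2 * lam)]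

private lemma mySq {a b : ℝ} (h : a ≤ b) (ha : 0 ≤ a) : a ^ 2 ≤ b ^ 2 := by nlinarith

private lemma arith1 {r Rx Qx τx L da db : ℝ} (hr : 0 < r) (hrRx : r ≤ Rx)
    (hda : da ^ 2 = Qx ^ 2 + τx ^ 2) (hdb : db ^ 2 = Qx ^ 2 + (τx - L) ^ 2)
    (hQxsq : Qx ^ 2 ≤ Rx ^ 2) (hτ0 : 0 ≤ τx) (hτL : τx ≤ L)
    (hda0 : 0 ≤ da) (hdb0 : 0 ≤ db) :
    (max r (min da db)) ^ 2 ≤ Rx ^ 2 + (min τx (L - τx)) ^ 2 := by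
  have h0m : (0:ℝ) ≤ min da db := le_min hda0 hdb0
  have hmin0 : 0 ≤ min τx (L - τx) := le_min hτ0 (by linarith)
  rcases max_choice r (min da db) with he | he
  · rw [he]; nlinarith
  · rw [he]
    rcases le_total τx (L - τx) with hc | hc
    · have h6 : min da db ≤ da := min_le_left _ _
      have h7 : min τx (L - τx) = τx := min_eq_left hc
      rw [h7]; nlinarith
    · have h6 : min da db ≤ db := min_le_right _ _
      have h7 : min τx (L - τx) = L - τx := min_eq_right hc
      rw [h7]; nlinarith

private lemma keyArith {dp T nzx2 lam Rex Rx hh : ℝ}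
    (h1 : dp ^ 2 + T ≤ nzx2) (h2 : nzx2 ≤ (lam * Rex) ^ 2)
    (h3 : Rex ^ 2 ≤ Rx ^ 2 + hh ^ 2) (hl0 : 0 ≤ lam) (hl1 : lam ≤ 1) :
    dp ^ 2 + T ≤ lam ^ 2 * Rx ^ 2 + hh ^ 2 := by
  have e1 : (lam * Rex) ^ 2 = lam ^ 2 * Rex ^ 2 := by ring
  have e2 : lam ^ 2 * Rex ^ 2 ≤ lam ^ 2 * (Rx ^ 2 + hh ^ 2) :=
    mul_le_mul_of_nonneg_left h3 (sq_nonneg lam)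
  have e3 : 0 ≤ (1 - lam ^ 2) * hh ^ 2 :=
    mul_nonneg (by nlinarith) (sq_nonneg hh)
  nlinarith [e1, e2, e3]

private lemma geomOut {τ τ0 Lv hh : ℝ} (h1 : hh ≤ Lv - τ0) (h2 : 0 ≤ hh)
    (h3 : Lv ≤ τ) (h4 : τ0 ≤ Lv) :
    (τ - Lv) ^ 2 + hh ^ 2 ≤ (τ - τ0) ^ 2 := by
  nlinarith [mul_nonneg (by linarith : (0:ℝ) ≤ τ - Lv) (by linarith : (0:ℝ) ≤ Lv - τ0)]

private lemma geomIn {τ τ0 hh : ℝ} (h1 : hh ≤ τ0) (h2 : 0 ≤ hh)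
    (h3 : τ ≤ 0) (h4 : 0 ≤ τ0) :
    τ ^ 2 + hh ^ 2 ≤ (τ - τ0) ^ 2 := by
  nlinarith [mul_nonneg (by linarith : (0:ℝ) ≤ -τ) (by linarith : (0:ℝ) ≤ τ0)]

private lemma caseOutArith {dzb Qz Qx dp e T lam Rx hh : ℝ}
    (hdz : dzb ^ 2 = Qz ^ 2 + e ^ 2)
    (hQz : Qz ≤ Qx + dp) (hQz0 : 0 ≤ Qz) (hdp0 : 0 ≤ dp) (hQx0 : 0 ≤ Qx)
    (hgeom : e ^ 2 + hh ^ 2 ≤ T)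
    (hkey : dp ^ 2 + T ≤ lam ^ 2 * Rx ^ 2 + hh ^ 2)
    (hQx_le : Qx ≤ Rx) (h1 : dp ≤ lam * Rx) (hRx0 : 0 ≤ Rx) :
    dzb ^ 2 ≤ ((1 + lam) * Rx) ^ 2 := by
  have hc : Qx * dp ≤ Rx * (lam * Rx) := by
    apply mul_le_mul hQx_le h1 hdp0 hRx0
  nlinarith [mySq hQz hQz0, mySq hQx_le hQx0]

end ArithHelpers

section MainLemmas

variable {a b v : EuclideanSpace ℝ (Fin d)}

/-- Core estimate: any point of the shrunken capsule `C^lam(x,r)` is at distance at most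
`(1+lam) * max r (d(x,s))` from the segment. -/
lemma lemA (hv : ‖v‖ = 1) (hdir : b - a = ‖b - a‖ • v) (hab : a ≠ b)
    {r lam : ℝ} (hr : 0 < r) (hl0 : 0 < lam) (hl1 : lam < 1)
    {x z : EuclideanSpace ℝ (Fin d)}
    (h1 : ‖pperp v (z - x)‖ ≤ lam * max r (Metric.infDist x (segment ℝ a b)))
    (h2 : ‖z - x‖ ≤ lam * max r (min (dist x a) (dist x b))) :
    Metric.infDist z (segment ℝ a b) ≤
      (1 + lam) * max r (Metric.infDist x (segment ℝ a b)) := by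
  set Rx := max r (Metric.infDist x (segment ℝ a b)) with hRxdef
  have hRx0 : 0 < Rx := lt_of_lt_of_le hr (le_max_left _ _)
  have hdsx_le : Metric.infDist x (segment ℝ a b) ≤ Rx := le_max_right _ _
  clear_value Rx
  by_cases hx : Metric.infDist x (segment ℝ a b) = min (dist x a) (dist x b)
  · -- ball case at x
    rw [← hx, ← hRxdef] at h2
    have h3 : Metric.infDist z (segment ℝ a b) ≤
        Metric.infDist x (segment ℝ a b) + dist z x := Metric.infDist_le_infDist_add_dist
    rw [dist_eq_norm] at h3
    have : (1 + lam) * Rx = Rx + lam * Rx := by ring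
    linarith
  · -- cylinder case at x
    obtain ⟨hτ0, hτL, hQx⟩ := cyl_case hv hdir hab x hx
    have hda : dist x a ^ 2 = ‖pperp v (x - a)‖ ^ 2 + ⟪x - a, v⟫_ℝ ^ 2 := dist_a_sq (a := a) hv x
    have hdb : dist x b ^ 2 = ‖pperp v (x - a)‖ ^ 2 + (⟪x - a, v⟫_ℝ - ‖b - a‖) ^ 2 :=
      dist_b_sq hv hdir x
    have hdaz : dist z a ^ 2 = ‖pperp v (z - a)‖ ^ 2 + ⟪z - a, v⟫_ℝ ^ 2 := dist_a_sq (a := a) hv z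
    have hdbz : dist z b ^ 2 = ‖pperp v (z - a)‖ ^ 2 + (⟪z - a, v⟫_ℝ - ‖b - a‖) ^ 2 :=
      dist_b_sq hv hdir z
    have hadd : pperp v (z - a) = pperp v (x - a) + pperp v (z - x) := by
      rw [← pperp_add]; congr 1; abel
    have hQz_le : ‖pperp v (z - a)‖ ≤ ‖pperp v (x - a)‖ + ‖pperp v (z - x)‖ := by
      rw [hadd]; exact norm_add_le _ _
    have hinner : ⟪z - a, v⟫_ℝ - ⟪x - a, v⟫_ℝ = ⟪z - x, v⟫_ℝ := by
      rw [← inner_sub_left]; congr 1; abel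
    have hsplit : ‖pperp v (z - x)‖ ^ 2 + (⟪z - a, v⟫_ℝ - ⟪x - a, v⟫_ℝ) ^ 2 = ‖z - x‖ ^ 2 := by
      rw [hinner, eq_comm]
      exact normsq_split hv (z - x)
    -- abstract all real quantities
    set L := ‖b - a‖ with hLdef
    set τx := ⟪x - a, v⟫_ℝ with hτxdef
    set τz := ⟪z - a, v⟫_ℝ with hτzdef
    set Qx := ‖pperp v (x - a)‖ with hQxdef
    set Qz := ‖pperp v (z - a)‖ with hQzdef
    set dp := ‖pperp v (z - x)‖ with hdpdef
    have hdp0 : 0 ≤ dp := norm_nonneg _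
    have hQz0 : 0 ≤ Qz := norm_nonneg _
    have hQx0 : 0 ≤ Qx := norm_nonneg _
    have hQx_le : Qx ≤ Rx := by rw [← hQx]; exact hdsx_le
    have hQxsq : Qx ^ 2 ≤ Rx ^ 2 := mySq hQx_le hQx0
    set hh := min τx (L - τx) with hhdef
    clear_value L τx τz Qx Qz dp hh
    have hh0 : 0 ≤ hh := by rw [hhdef]; exact le_min hτ0 (by linarith)
    have hhle1 : hh ≤ τx := by rw [hhdef]; exact min_le_left _ _
    have hhle2 : hh ≤ L - τx := by rw [hhdef]; exact min_le_right _ _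
    have hrRx : r ≤ Rx := by rw [hRxdef]; exact le_max_left _ _
    have hRex_sq : (max r (min (dist x a) (dist x b))) ^ 2 ≤ Rx ^ 2 + hh ^ 2 := by
      rw [hhdef]
      exact arith1 hr hrRx hda hdb hQxsq hτ0 hτL dist_nonneg dist_nonneg
    have hzx_sq : ‖z - x‖ ^ 2 ≤ (lam * max r (min (dist x a) (dist x b))) ^ 2 :=
      mySq h2 (norm_nonneg _)
    have hmrm : (lam * max r (min (dist x a) (dist x b))) ^ 2 =
        lam ^ 2 * (max r (min (dist x a) (dist x b))) ^ 2 := by ring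
    have hkey : dp ^ 2 + (τz - τx) ^ 2 ≤ lam ^ 2 * Rx ^ 2 + hh ^ 2 := by
      refine keyArith (le_of_eq hsplit) hzx_sq hRex_sq hl0.le hl1.le
    by_cases hz1 : 0 ≤ τz
    · by_cases hz2 : τz ≤ L
      · -- middle: distance to segment at parameter τz
        have hdir' : b - a = ‖b - a‖ • v := by rw [← hLdef]; exact hdir
        have hz2' : τz ≤ ‖b - a‖ := by rw [← hLdef]; exact hz2
        have hmem := param_mem_seg hdir' hab hz1 hz2'
        have hds : Metric.infDist z (segment ℝ a b) ≤ dist z (a + τz • v) :=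
          Metric.infDist_le_dist_of_mem hmem
        have hdsq : dist z (a + τz • v) ^ 2 = Qz ^ 2 := by
          rw [dist_param_sq hv z τz, ← hτzdef, ← hQzdef, sub_self]
          norm_num
        have hdq : dist z (a + τz • v) ≤ Qz := le_of_sq_le_sq hQz0 hdsq.le
        have hd1 : dp ≤ lam * Rx := h1
        have hring : (1 + lam) * Rx = Rx + lam * Rx := by ring
        calc Metric.infDist z (segment ℝ a b) ≤ Qz := le_trans hds hdq
          _ ≤ Qx + dp := hQz_le
          _ ≤ (1 + lam) * Rx := by linarith
      · -- beyond b
        rw [not_le] at hz2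
        have hdsb : Metric.infDist z (segment ℝ a b) ≤ dist z b :=
          Metric.infDist_le_dist_of_mem (right_mem_segment ℝ a b)
        have hgeom : (τz - L) ^ 2 + hh ^ 2 ≤ (τz - τx) ^ 2 :=
          geomOut hhle2 hh0 hz2.le hτL
        have hfin_sq : dist z b ^ 2 ≤ ((1 + lam) * Rx) ^ 2 :=
          caseOutArith hdbz hQz_le hQz0 hdp0 hQx0 hgeom hkey hQx_le h1 hRx0.le
        exact le_trans hdsb (le_of_sq_le_sq (mul_nonneg (by linarith) hRx0.le) hfin_sq)
    · -- before a
      rw [not_le] at hz1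
      have hdsa : Metric.infDist z (segment ℝ a b) ≤ dist z a :=
        Metric.infDist_le_dist_of_mem (left_mem_segment ℝ a b)
      have hgeom : τz ^ 2 + hh ^ 2 ≤ (τz - τx) ^ 2 :=
        geomIn hhle1 hh0 hz1.le hτ0
      have hfin_sq : dist z a ^ 2 ≤ ((1 + lam) * Rx) ^ 2 :=
        caseOutArith hdaz hQz_le hQz0 hdp0 hQx0 hgeom hkey hQx_le h1 hRx0.le
      exact le_trans hdsa (le_of_sq_le_sq (mul_nonneg (by linarith) hRx0.le) hfin_sq)

/-- The per-segment expansion-containment. -/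
lemma keySeg (hv : ‖v‖ = 1) (hdir : b - a = ‖b - a‖ • v) (hab : a ≠ b)
    {r lam : ℝ} (hr : 0 < r) (hl0 : 0 < lam) (hl1 : lam < 1)
    {x y z w : EuclideanSpace ℝ (Fin d)}
    (hzx : z ∈ scaleAbout x lam (capsuleSeg a b v x r))
    (hzy : z ∈ scaleAbout y lam (capsuleSeg a b v y r))
    (hw : w ∈ scaleAbout y lam (capsuleSeg a b v y r)) :
    w ∈ scaleAbout x ((3 + lam) / (1 - lam) * lam) (capsuleSeg a b v x r) := by
  have hmu : 0 < (3 + lam) / (1 - lam) * lam :=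
    mul_pos (div_pos (by linarith) (by linarith)) hl0
  rw [mem_scaleAbout_capsuleSeg hv hl0] at hzx hzy hw
  rw [mem_scaleAbout_capsuleSeg hv hmu]
  obtain ⟨hzx1, hzx2⟩ := hzx
  obtain ⟨hzy1, hzy2⟩ := hzy
  obtain ⟨hw1, hw2⟩ := hw
  set Rx := max r (Metric.infDist x (segment ℝ a b)) with hRx
  set Rex := max r (min (dist x a) (dist x b)) with hRex
  set Ry := max r (Metric.infDist y (segment ℝ a b)) with hRy
  set Rey := max r (min (dist y a) (dist y b)) with hRey
  have hRx0 : 0 < Rx := lt_of_lt_of_le hr (by rw [hRx]; exact le_max_left _ _)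
  have hRy0 : 0 < Ry := lt_of_lt_of_le hr (by rw [hRy]; exact le_max_left _ _)
  have hRex0 : 0 < Rex := lt_of_lt_of_le hr (by rw [hRex]; exact le_max_left _ _)
  have hRey0 : 0 < Rey := lt_of_lt_of_le hr (by rw [hRey]; exact le_max_left _ _)
  have hrRx : r ≤ Rx := by rw [hRx]; exact le_max_left _ _
  have hrRex : r ≤ Rex := by rw [hRex]; exact le_max_left _ _
  clear_value Rx Rex Ry Rey
  -- Lemma A applied at x
  have hdsz : Metric.infDist z (segment ℝ a b) ≤ (1 + lam) * Rx := by
    rw [hRx]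
    rw [hRx] at hzx1
    rw [hRex] at hzx2
    exact lemA hv hdir hab hr hl0 hl1 hzx1 hzx2
  have hdsz0 : 0 ≤ Metric.infDist z (segment ℝ a b) := Metric.infDist_nonneg
  -- d(y,s) ≤ d(z,s) + lam * Ry
  have hdsy : Metric.infDist y (segment ℝ a b) ≤
      Metric.infDist z (segment ℝ a b) + lam * Ry := by
    by_cases hy : Metric.infDist y (segment ℝ a b) = min (dist y a) (dist y b)
    · have h3 : Metric.infDist y (segment ℝ a b) ≤
          Metric.infDist z (segment ℝ a b) + dist y z := Metric.infDist_le_infDist_add_dist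
      have h4 : dist y z = ‖z - y‖ := by rw [dist_eq_norm, norm_sub_rev]
      have h5 : Rey = Ry := by rw [hRey, hRy, hy]
      have h6 : ‖z - y‖ ≤ lam * Ry := by rw [← h5]; exact hzy2
      rw [h4] at h3
      linarith
    · obtain ⟨_, _, hQy⟩ := cyl_case hv hdir hab y hy
      have h6 : pperp v (y - a) = pperp v (z - a) + pperp v (y - z) := by
        rw [← pperp_add]; congr 1; abel
      have h7 : ‖pperp v (y - a)‖ ≤ ‖pperp v (z - a)‖ + ‖pperp v (y - z)‖ := by
        rw [h6]; exact norm_add_le _ _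
      have h8 : ‖pperp v (y - z)‖ = ‖pperp v (z - y)‖ := norm_pperp_sub_rev v y z
      have h9 : ‖pperp v (z - a)‖ ≤ Metric.infDist z (segment ℝ a b) := Q_le_ds hv hdir z
      rw [hQy]
      rw [h8] at h7
      linarith [hzy1]
  -- (1-lam) Ry ≤ (1+lam) Rx
  have hRyRx : (1 - lam) * Ry ≤ (1 + lam) * Rx := by
    have hb : Metric.infDist y (segment ℝ a b) ≤ (1 + lam) * Rx + lam * Ry := by linarith
    have h10 : Ry ≤ max r ((1 + lam) * Rx + lam * Ry) :=
      le_trans (le_of_eq hRy) (max_le_max le_rfl hb)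
    have h11 : max r ((1 + lam) * Rx + lam * Ry) = (1 + lam) * Rx + lam * Ry := by
      apply max_eq_right
      nlinarith [mul_pos hl0 hRy0, mul_pos hl0 hRx0]
    rw [h11] at h10; linarith
  -- (1-lam) Rey ≤ (1+lam) Rex
  have hReyRex : (1 - lam) * Rey ≤ (1 + lam) * Rex := by
    have hD : dist y x ≤ lam * Rey + lam * Rex := by
      have hd1 : dist y z = ‖z - y‖ := by rw [dist_eq_norm, norm_sub_rev]
      have hd2 : dist z x = ‖z - x‖ := dist_eq_norm z x
      calc dist y x ≤ dist y z + dist z x := dist_triangle y z x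
        _ ≤ lam * Rey + lam * Rex := by rw [hd1, hd2]; exact add_le_add hzy2 hzx2
    have hde : min (dist y a) (dist y b) ≤ min (dist x a) (dist x b) + dist y x := by
      rcases le_total (dist x a) (dist x b) with hc | hc
      · rw [min_eq_left hc]
        calc min (dist y a) (dist y b) ≤ dist y a := min_le_left _ _
          _ ≤ dist y x + dist x a := dist_triangle y x a
          _ = dist x a + dist y x := by ring
      · rw [min_eq_right hc]
        calc min (dist y a) (dist y b) ≤ dist y b := min_le_right _ _
          _ ≤ dist y x + dist x b := dist_triangle y x b
          _ = dist x b + dist y x := by ring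
    have hminRex : min (dist x a) (dist x b) ≤ Rex := by
      rw [hRex]; exact le_max_right _ _
    have h12 : Rey ≤ Rex + dist y x := by
      rw [hRey]
      apply max_le
      · exact le_trans hrRex (le_add_of_nonneg_right dist_nonneg)
      · exact le_trans hde (add_le_add_left hminRex _)
    linarith
  constructor
  · -- cylinder bound
    have ha1 : pperp v (w - x) = pperp v (w - y) + pperp v (y - z) + pperp v (z - x) := by
      rw [← pperp_add, ← pperp_add]; congr 1; abel
    have ha2 : ‖pperp v (w - x)‖ ≤
        ‖pperp v (w - y)‖ + ‖pperp v (y - z)‖ + ‖pperp v (z - x)‖ := by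
      rw [ha1]
      exact le_trans (norm_add_le _ _)
        (by linarith [norm_add_le (pperp v (w - y)) (pperp v (y - z))])
    have h8 : ‖pperp v (y - z)‖ = ‖pperp v (z - y)‖ := norm_pperp_sub_rev v y z
    have hmu2 : lam * Ry + lam * Ry + lam * Rx ≤ (3 + lam) / (1 - lam) * lam * Rx :=
      expandArith hl0 hl1 hRyRx
    rw [h8] at ha2
    linarith [hw1, hzy1, hzx1]
  · -- ball bound
    have hb1 : w - x = (w - y) + (y - z) + (z - x) := by abel
    have hb2 : ‖w - x‖ ≤ ‖w - y‖ + ‖y - z‖ + ‖z - x‖ := by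
      rw [hb1]
      exact le_trans (norm_add_le _ _) (by linarith [norm_add_le (w - y) (y - z)])
    have h8 : ‖y - z‖ = ‖z - y‖ := norm_sub_rev y z
    have hmu2 : lam * Rey + lam * Rey + lam * Rex ≤ (3 + lam) / (1 - lam) * lam * Rex :=
      expandArith hl0 hl1 hReyRex
    rw [h8] at hb2
    linarith [hw2, hzy2, hzx2]

end MainLemmas

lemma homothety_injective {x : EuclideanSpace ℝ (Fin d)} {mu : ℝ} (hmu : mu ≠ 0) :
    Function.Injective (AffineMap.homothety x mu) := by
  intro p q h
  simp only [AffineMap.homothety_apply, vsub_eq_sub, vadd_eq_add] at h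
  have h2 : mu • (p - x) = mu • (q - x) := by
    have := congrArg (fun u => u - x) h
    simpa using this
  have h3 : p - x = q - x := smul_right_injective _ hmu h2
  have := congrArg (fun u => u + x) h3
  simpa using this

lemma scaleAbout_iInter {n : ℕ} (hn : 1 ≤ n) {x : EuclideanSpace ℝ (Fin d)} {mu : ℝ}
    (hmu : mu ≠ 0) (C : Fin n → Set (EuclideanSpace ℝ (Fin d))) :
    scaleAbout x mu (⋂ i, C i) = ⋂ i, scaleAbout x mu (C i) := by
  have : Nonempty (Fin n) := ⟨⟨0, hn⟩⟩
  exact Set.InjOn.image_iInter_eq ((homothety_injective hmu).injOn)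

end CapsuleAux

/-- **Expansion-Containment.** If the shrunken capsules
`C^λ(x, r)` and `C^λ(y, r)` overlap, then `C^λ(y, r) ⊆ C^{αλ}(x, r)` with
`α = (3+λ)/(1-λ)`. -/
theorem capsule_expansion_containment {d n : ℕ} (hd : 1 ≤ d) (hn : 1 ≤ n)
    (a b v : Fin n → EuclideanSpace ℝ (Fin d))
    (hab : ∀ i, a i ≠ b i)
    (hv : ∀ i, ‖v i‖ = 1)
    (hdir : ∀ i, b i - a i = ‖b i - a i‖ • v i)
    (hdisj : ∀ i j, i ≠ j → Disjoint (segment ℝ (a i) (b i)) (segment ℝ (a j) (b j)))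
    (r : ℝ) (hr : 0 < r) (lam : ℝ) (hlam0 : 0 < lam) (hlam1 : lam < 1)
    (x y : EuclideanSpace ℝ (Fin d))
    (hmeet : (scaleAbout x lam (capsuleFam a b v x r) ∩
        scaleAbout y lam (capsuleFam a b v y r)).Nonempty) :
    scaleAbout y lam (capsuleFam a b v y r) ⊆
      scaleAbout x ((3 + lam) / (1 - lam) * lam) (capsuleFam a b v x r) := by
  obtain ⟨z, hzx, hzy⟩ := hmeet
  have hmu0 : (0:ℝ) < (3 + lam) / (1 - lam) * lam :=
    mul_pos (div_pos (by linarith) (by linarith)) hlam0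
  intro p hp
  simp only [capsuleFam] at hzx hzy hp ⊢
  rw [CapsuleAux.scaleAbout_iInter hn hlam0.ne'] at hzx hzy hp
  rw [CapsuleAux.scaleAbout_iInter hn hmu0.ne']
  rw [Set.mem_iInter] at hzx hzy hp ⊢
  intro i
  exact CapsuleAux.keySeg (hv i) (hdir i) (hab i) hr hlam0 hlam1 (hzx i) (hzy i) (hp i)
end
end

section
/- (Single-segment Expansion-Containment) Let s be a single closed line segment in ℝᵈ, let r > 0 and 0 < λ < 1, and set α = (3+λ)/(1−λ). For any x, y ∈ ℝᵈ, if C_s^λ(x, r) ∩ C_s^λ(y, r) ≠ ∅, then C_s^λ(y, r) ⊆ C_s^{αλ}(x, r). -/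
noncomputable section

open Metric Set MeasureTheory
open scoped InnerProductSpace Classical

variable {d n : ℕ}

def perp (v u : EuclideanSpace ℝ (Fin d)) : EuclideanSpace ℝ (Fin d) := u - ⟪u, v⟫_ℝ • v

lemma perp_inner {v : EuclideanSpace ℝ (Fin d)} (hv : ‖v‖ = 1) (u : EuclideanSpace ℝ (Fin d)) :
    ⟪perp v u, v⟫_ℝ = 0 := by
  have h : ⟪v, v⟫_ℝ = 1 := by
    rw [real_inner_self_eq_norm_sq, hv]; norm_num
  rw [perp, inner_sub_left, real_inner_smul_left, h, mul_one, sub_self]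

lemma perp_add (v u w : EuclideanSpace ℝ (Fin d)) : perp v (u + w) = perp v u + perp v w := by
  simp only [perp, inner_add_left, add_smul]; abel

lemma perp_neg (v u : EuclideanSpace ℝ (Fin d)) : perp v (-u) = - perp v u := by
  simp only [perp, inner_neg_left, neg_smul]; abel

lemma perp_smul (v : EuclideanSpace ℝ (Fin d)) (c : ℝ) (u : EuclideanSpace ℝ (Fin d)) :
    perp v (c • u) = c • perp v u := by
  simp only [perp, real_inner_smul_left, smul_sub, smul_smul]

lemma perp_self {v : EuclideanSpace ℝ (Fin d)} (hv : ‖v‖ = 1) : perp v v = 0 := by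
  have h : ⟪v, v⟫_ℝ = 1 := by
    rw [real_inner_self_eq_norm_sq, hv]; norm_num
  rw [perp, h, one_smul, sub_self]

lemma norm_perp_sq {v : EuclideanSpace ℝ (Fin d)} (hv : ‖v‖ = 1) (u : EuclideanSpace ℝ (Fin d)) :
    ‖perp v u‖ ^ 2 + ⟪u, v⟫_ℝ ^ 2 = ‖u‖ ^ 2 := by
  have h0 := perp_inner hv u
  have hu : u = perp v u + ⟪u, v⟫_ℝ • v := by rw [perp]; abel
  have h1 : ⟪perp v u, ⟪u, v⟫_ℝ • v⟫_ℝ = 0 := by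
    rw [real_inner_smul_right, h0, mul_zero]
  have h2 : ‖(⟪u, v⟫_ℝ : ℝ) • v‖ ^ 2 = ⟪u, v⟫_ℝ ^ 2 := by
    rw [norm_smul, hv, mul_one, Real.norm_eq_abs, sq_abs]
  calc ‖perp v u‖ ^ 2 + ⟪u, v⟫_ℝ ^ 2 = ‖perp v u‖ ^ 2 + 2 * ⟪perp v u, ⟪u, v⟫_ℝ • v⟫_ℝ + ‖(⟪u, v⟫_ℝ : ℝ) • v‖ ^ 2 := by
        rw [h1, h2]; ring
    _ = ‖perp v u + ⟪u, v⟫_ℝ • v‖ ^ 2 := (norm_add_sq_real _ _).symm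
    _ = ‖u‖ ^ 2 := by rw [← hu]

lemma norm_perp_le {v : EuclideanSpace ℝ (Fin d)} (hv : ‖v‖ = 1) (u : EuclideanSpace ℝ (Fin d)) :
    ‖perp v u‖ ≤ ‖u‖ := by
  nlinarith [norm_perp_sq hv u, norm_nonneg (perp v u), norm_nonneg u, sq_nonneg ⟪u, v⟫_ℝ]
variable {d : ℕ}

lemma seg_compact (a b : EuclideanSpace ℝ (Fin d)) : IsCompact (segment ℝ a b) := by
  rw [segment_eq_image']
  exact isCompact_Icc.image (continuous_const.add (continuous_id.smul continuous_const))

lemma exists_min (a b p : EuclideanSpace ℝ (Fin d)) :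
    ∃ q ∈ segment ℝ a b, Metric.infDist p (segment ℝ a b) = dist p q :=
  (seg_compact a b).exists_infDist_eq_dist ⟨a, left_mem_segment ℝ a b⟩ p

lemma seg_param {a b v : EuclideanSpace ℝ (Fin d)} (hdir : b - a = ‖b - a‖ • v)
    {q : EuclideanSpace ℝ (Fin d)} (hq : q ∈ segment ℝ a b) :
    ∃ t : ℝ, 0 ≤ t ∧ t ≤ ‖b - a‖ ∧ q = a + t • v := by
  set L := ‖b - a‖ with hL
  rw [segment_eq_image'] at hq
  obtain ⟨θ, ⟨hθ0, hθ1⟩, rfl⟩ := hq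
  have hL0 : 0 ≤ L := norm_nonneg _
  refine ⟨θ * L, by positivity, by nlinarith, ?_⟩
  show a + θ • (b - a) = a + (θ * L) • v
  rw [mul_smul, ← hdir]

lemma mem_seg_of_t {a b v : EuclideanSpace ℝ (Fin d)} (hab : a ≠ b)
    (hdir : b - a = ‖b - a‖ • v) {t : ℝ} (h0 : 0 ≤ t) (h1 : t ≤ ‖b - a‖) :
    a + t • v ∈ segment ℝ a b := by
  have hL : (0:ℝ) < ‖b - a‖ := by
    rw [norm_pos_iff, sub_ne_zero]; exact fun h => hab h.symm
  set L := ‖b - a‖ with hLdef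
  rw [segment_eq_image']
  refine ⟨t / L, ⟨by positivity, by rw [div_le_one hL]; exact h1⟩, ?_⟩
  show a + (t / L) • (b - a) = a + t • v
  rw [hdir, smul_smul, div_mul_cancel₀ _ hL.ne']

lemma Pline {a b v : EuclideanSpace ℝ (Fin d)} (hv : ‖v‖ = 1) (hdir : b - a = ‖b - a‖ • v)
    (p : EuclideanSpace ℝ (Fin d)) :
    ‖perp v (p - a)‖ ≤ Metric.infDist p (segment ℝ a b) := by
  obtain ⟨q, hq, hEq⟩ := exists_min a b p
  obtain ⟨t, ht0, ht1, rfl⟩ := seg_param hdir hq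
  have h1 : perp v (p - (a + t • v)) = perp v (p - a) := by
    have : p - (a + t • v) = (p - a) + (-(t • v)) := by abel
    rw [this, perp_add, perp_neg, perp_smul, perp_self hv, smul_zero, neg_zero, add_zero]
  calc ‖perp v (p - a)‖ = ‖perp v (p - (a + t • v))‖ := by rw [h1]
    _ ≤ ‖p - (a + t • v)‖ := norm_perp_le hv _
    _ = dist p (a + t • v) := (dist_eq_norm _ _).symm
    _ = Metric.infDist p (segment ℝ a b) := hEq.symm

lemma cyl_char {a b v : EuclideanSpace ℝ (Fin d)} (hab : a ≠ b) (hv : ‖v‖ = 1)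
    (hdir : b - a = ‖b - a‖ • v) (p : EuclideanSpace ℝ (Fin d))
    (hp : Metric.infDist p (segment ℝ a b) ≠ min (dist p a) (dist p b)) :
    0 ≤ ⟪p - a, v⟫_ℝ ∧ ⟪p - a, v⟫_ℝ ≤ ‖b - a‖ ∧
      Metric.infDist p (segment ℝ a b) = ‖perp v (p - a)‖ := by
  have hL : (0:ℝ) < ‖b - a‖ := by
    rw [norm_pos_iff, sub_ne_zero]; exact fun h => hab h.symm
  obtain ⟨q, hq, hEq⟩ := exists_min a b p
  obtain ⟨t, ht0, ht1, rfl⟩ := seg_param hdir hq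
  set δ := Metric.infDist p (segment ℝ a b) with hδ
  have hδa : δ ≤ dist p a := Metric.infDist_le_dist_of_mem (left_mem_segment ℝ a b)
  have hδb : δ ≤ dist p b := Metric.infDist_le_dist_of_mem (right_mem_segment ℝ a b)
  have hlt : δ < min (dist p a) (dist p b) := lt_of_le_of_ne (le_min hδa hδb) hp
  -- t is strictly interior
  have ht0' : 0 < t := by
    rcases ht0.lt_or_eq with h | h
    · exact h
    · exfalso
      have : a + t • v = a := by rw [← h, zero_smul, add_zero]
      rw [this] at hEq
      have := hlt.trans_le (min_le_left _ _)
      rw [hEq] at this; exact lt_irrefl _ this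
  have ht1' : t < ‖b - a‖ := by
    rcases ht1.lt_or_eq with h | h
    · exact h
    · exfalso
      have hb : a + t • v = b := by
        rw [h, ← hdir]; abel
      rw [hb] at hEq
      have := hlt.trans_le (min_le_right _ _)
      rw [hEq] at this; exact lt_irrefl _ this
  set q := a + t • v with hqdef
  have hκ : ⟪p - q, v⟫_ℝ = 0 := by
    by_contra hκ
    have key : ∀ ε : ℝ, 0 ≤ t + ε → t + ε ≤ ‖b - a‖ →
        δ ^ 2 ≤ δ ^ 2 - 2 * ε * ⟪p - q, v⟫_ℝ + ε ^ 2 := by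
      intro ε hε0 hε1
      have hmem : a + (t + ε) • v ∈ segment ℝ a b := mem_seg_of_t hab hdir hε0 hε1
      have hd : δ ≤ dist p (a + (t + ε) • v) := Metric.infDist_le_dist_of_mem hmem
      have hrw : p - (a + (t + ε) • v) = (p - q) - ε • v := by
        rw [hqdef, add_smul]; abel
      have hnorm : dist p (a + (t + ε) • v) ^ 2
          = δ ^ 2 - 2 * ε * ⟪p - q, v⟫_ℝ + ε ^ 2 := by
        rw [dist_eq_norm, hrw, norm_sub_sq_real, real_inner_smul_right, norm_smul,
          Real.norm_eq_abs, hv, mul_one, sq_abs]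
        have : ‖p - q‖ = δ := by rw [hEq, dist_eq_norm]
        rw [this]; ring
      nlinarith [Metric.infDist_nonneg (x := p) (s := segment ℝ a b), dist_nonneg (x := p) (y := a + (t + ε) • v)]
    rcases lt_or_gt_of_ne hκ with hneg | hpos
    · -- κ < 0 : move ε negative
      set κ := ⟪p - q, v⟫_ℝ
      have hε : 0 < min (-κ) t := lt_min (by linarith) ht0'
      have h2 := key (-(min (-κ) t)) (by nlinarith [min_le_right (-κ) t]) (by nlinarith [min_le_right (-κ) t])
      have hm1 : min (-κ) t ≤ -κ := min_le_left _ _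
      nlinarith [h2]
    · set κ := ⟪p - q, v⟫_ℝ
      have hε : 0 < min κ (‖b - a‖ - t) := lt_min hpos (by linarith)
      have h2 := key (min κ (‖b - a‖ - t)) (by positivity) (by nlinarith [min_le_right κ (‖b - a‖ - t)])
      have hm1 : min κ (‖b - a‖ - t) ≤ κ := min_le_left _ _
      nlinarith [h2]
  have hτ : ⟪p - a, v⟫_ℝ = t := by
    have hsplit : p - a = (p - q) + t • v := by rw [hqdef]; abel
    rw [hsplit, inner_add_left, hκ, real_inner_smul_left, real_inner_self_eq_norm_sq, hv]
    ring
  refine ⟨by rw [hτ]; exact ht0'.le, by rw [hτ]; exact ht1, ?_⟩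
  have hperp : perp v (p - a) = p - q := by
    rw [perp, hτ, hqdef]; abel
  rw [hperp, hEq, dist_eq_norm]


lemma quad_bound {δ g ρ : ℝ} (hδ0 : 0 ≤ δ) (hg0 : 0 ≤ g) (hδρ : δ ≤ ρ) (hg : g ≤ ρ) :
    (δ + g) ^ 2 + (ρ ^ 2 - g ^ 2) ≤ (2 * ρ) ^ 2 := by nlinarith

lemma sqrt_bound {x c : ℝ} (hx : 0 ≤ x) (hc : 0 ≤ c) (h : x ^ 2 ≤ c ^ 2) : x ≤ c := by
  nlinarith

lemma e2_bound {e m h g U ρ : ℝ} (hsq : (e + m) ^ 2 ≤ h ^ 2) (hem : 0 ≤ e * m)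
    (hpyth : g ^ 2 + h ^ 2 = U) (hu2 : U ≤ ρ ^ 2 + m ^ 2) : e ^ 2 ≤ ρ ^ 2 - g ^ 2 := by
  nlinarith

set_option maxHeartbeats 1000000 in
lemma claimB {a b v : EuclideanSpace ℝ (Fin d)} (hab : a ≠ b) (hv : ‖v‖ = 1)
    (hdir : b - a = ‖b - a‖ • v) {r : ℝ} (hr : 0 < r) (p z₀ : EuclideanSpace ℝ (Fin d))
    (hz : z₀ ∈ capsuleSeg a b v p r) :
    Metric.infDist z₀ (segment ℝ a b) ≤ 2 * max r (Metric.infDist p (segment ℝ a b)) := by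
  set δ := Metric.infDist p (segment ℝ a b) with hδdef
  set ρ := max r δ with hρdef
  have hδρ : δ ≤ ρ := le_max_right _ _
  have hrρ : r ≤ ρ := le_max_left _ _
  have hρ0 : 0 < ρ := lt_of_lt_of_le hr hrρ
  have hδ0 : 0 ≤ δ := Metric.infDist_nonneg
  unfold capsuleSeg at hz
  split_ifs at hz with hcase
  · have h1 : dist z₀ p ≤ ρ := Metric.mem_closedBall.mp hz
    calc Metric.infDist z₀ (segment ℝ a b) ≤ δ + dist z₀ p :=
          Metric.infDist_le_infDist_add_dist
      _ ≤ ρ + ρ := add_le_add hδρ h1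
      _ = 2 * ρ := by ring
  · obtain ⟨hτ0, hτL, hδeq⟩ := cyl_char hab hv hdir p hcase
    obtain ⟨hz1, hz2⟩ := hz
    set L := ‖b - a‖ with hLdef
    set τ := ⟪p - a, v⟫_ℝ with hτdef
    have hg : ‖perp v (z₀ - p)‖ ≤ ρ := hz1
    set g := ‖perp v (z₀ - p)‖ with hgdef
    set h := ⟪z₀ - p, v⟫_ℝ with hhdef
    have hg0 : 0 ≤ g := norm_nonneg _
    have hpa : ‖perp v (p - a)‖ ≤ δ := Pline hv hdir p
    have hga : ‖perp v (z₀ - a)‖ ≤ δ + g := by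
      have hsp : z₀ - a = (z₀ - p) + (p - a) := by abel
      rw [hsp, perp_add]
      calc ‖perp v (z₀ - p) + perp v (p - a)‖ ≤ g + ‖perp v (p - a)‖ := norm_add_le _ _
        _ ≤ δ + g := by linarith
    set m := min τ (L - τ) with hmdef
    have hm0 : 0 ≤ m := le_min hτ0 (by linarith)
    have hmτ : m ≤ τ := min_le_left _ _
    have hmL : m ≤ L - τ := min_le_right _ _
    have hpyth : g ^ 2 + h ^ 2 = ‖z₀ - p‖ ^ 2 := norm_perp_sq hv _
    have hτz : ⟪z₀ - a, v⟫_ℝ = τ + h := by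
      have hsp : z₀ - a = (z₀ - p) + (p - a) := by abel
      rw [hsp, inner_add_left]; ring
    have hperpz : perp v (z₀ - a) = (z₀ - a) - (τ + h) • v := by
      rw [perp, hτz]
    -- ball bound on ‖z₀ - p‖
    have hu2 : ‖z₀ - p‖ ^ 2 ≤ ρ ^ 2 + m ^ 2 := by
      have hb1 : dist z₀ p ≤ max r (min (dist p a) (dist p b)) := Metric.mem_closedBall.mp hz2
      have hpa2 : dist p a ^ 2 = ‖perp v (p - a)‖ ^ 2 + τ ^ 2 := by
        rw [dist_eq_norm]; exact (norm_perp_sq hv (p - a)).symm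
      have hpb2 : dist p b ^ 2 = ‖perp v (p - a)‖ ^ 2 + (L - τ) ^ 2 := by
        have h1 : perp v (p - b) = perp v (p - a) := by
          have hsp : p - b = (p - a) + (-(L • v)) := by
            rw [← hdir]; abel
          rw [hsp, perp_add, perp_neg, perp_smul, perp_self hv, smul_zero, neg_zero, add_zero]
        have h2 : ⟪p - b, v⟫_ℝ = τ - L := by
          have hsp : p - b = (p - a) - L • v := by
            rw [← hdir]; abel
          rw [hsp, inner_sub_left, real_inner_smul_left, real_inner_self_eq_norm_sq, hv]
          ring
        have h3 := norm_perp_sq hv (p - b)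
        rw [h1, h2] at h3
        rw [dist_eq_norm]
        nlinarith [h3]
      have hmin2 : min (dist p a) (dist p b) ^ 2 ≤ ρ ^ 2 + m ^ 2 := by
        rcases le_total τ (L - τ) with hcase2 | hcase2
        · have hmeq : m = τ := min_eq_left hcase2
          have : min (dist p a) (dist p b) ≤ dist p a := min_le_left _ _
          have hsq : min (dist p a) (dist p b) ^ 2 ≤ dist p a ^ 2 :=
            pow_le_pow_left₀ (le_min dist_nonneg dist_nonneg) this 2
          rw [hmeq]
          nlinarith [hsq, hpa2, hpa, hδρ, norm_nonneg (perp v (p - a))]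
        · have hmeq : m = L - τ := min_eq_right hcase2
          have : min (dist p a) (dist p b) ≤ dist p b := min_le_right _ _
          have hsq : min (dist p a) (dist p b) ^ 2 ≤ dist p b ^ 2 :=
            pow_le_pow_left₀ (le_min dist_nonneg dist_nonneg) this 2
          rw [hmeq]
          nlinarith [hsq, hpb2, hpa, hδρ, norm_nonneg (perp v (p - a))]
      have hd2 : dist z₀ p ^ 2 ≤ max r (min (dist p a) (dist p b)) ^ 2 :=
        pow_le_pow_left₀ dist_nonneg hb1 2
      have hmax2 : max r (min (dist p a) (dist p b)) ^ 2 ≤ ρ ^ 2 + m ^ 2 := by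
        rcases le_total r (min (dist p a) (dist p b)) with hc | hc
        · rw [max_eq_right hc]; exact hmin2
        · rw [max_eq_left hc]; nlinarith
      rw [← dist_eq_norm]
      linarith
    by_cases hin : 0 ≤ τ + h ∧ τ + h ≤ L
    · -- foot of z₀ is inside the segment
      have hmem : a + (τ + h) • v ∈ segment ℝ a b := mem_seg_of_t hab hdir hin.1 hin.2
      have hd : Metric.infDist z₀ (segment ℝ a b) ≤ dist z₀ (a + (τ + h) • v) :=
        Metric.infDist_le_dist_of_mem hmem
      have heq : dist z₀ (a + (τ + h) • v) = ‖perp v (z₀ - a)‖ := by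
        rw [dist_eq_norm, hperpz]
        congr 1
        abel
      rw [heq] at hd
      linarith
    · rcases not_and_or.mp hin with h1 | h2
      · -- τ + h < 0 : compare with endpoint a
        push_neg at h1
        set e := -(τ + h) with hedef
        have he : 0 < e := by simp only [hedef]; linarith
        have hem : e + m ≤ -h := by simp only [hedef]; linarith
        have hsq : (e + m) ^ 2 ≤ h ^ 2 := by
          have h0 : (0:ℝ) ≤ e + m := by linarith
          nlinarith [pow_le_pow_left₀ h0 hem 2]
        have he2 : e ^ 2 ≤ ρ ^ 2 - g ^ 2 :=
          e2_bound hsq (mul_nonneg he.le hm0) hpyth hu2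
        have hna : ‖z₀ - a‖ ^ 2 = ‖perp v (z₀ - a)‖ ^ 2 + e ^ 2 := by
          calc ‖z₀ - a‖ ^ 2 = ‖perp v (z₀ - a) + (τ + h) • v‖ ^ 2 := by
                congr 1
                rw [hperpz]; abel
            _ = ‖perp v (z₀ - a)‖ ^ 2 + e ^ 2 := by
                rw [norm_add_sq_real, real_inner_smul_right, perp_inner hv, mul_zero,
                  norm_smul, Real.norm_eq_abs, hv, mul_one, sq_abs]
                simp only [hedef]; ring
        have hd : Metric.infDist z₀ (segment ℝ a b) ≤ dist z₀ a :=
          Metric.infDist_le_dist_of_mem (left_mem_segment ℝ a b)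
        have hP2 : ‖perp v (z₀ - a)‖ ^ 2 ≤ (δ + g) ^ 2 :=
          pow_le_pow_left₀ (norm_nonneg _) hga 2
        have hda2 : dist z₀ a ^ 2 ≤ (2 * ρ) ^ 2 := by
          rw [dist_eq_norm, hna]
          linarith [hP2, he2, quad_bound hδ0 hg0 hδρ hg]
        have : dist z₀ a ≤ 2 * ρ := sqrt_bound dist_nonneg (by linarith) hda2
        linarith
      · -- τ + h > L : compare with endpoint b
        push_neg at h2
        set e := τ + h - L with hedef
        have he : 0 < e := by simp only [hedef]; linarith
        have hem : e + m ≤ h := by simp only [hedef]; linarith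
        have hsq : (e + m) ^ 2 ≤ h ^ 2 := by
          have h0 : (0:ℝ) ≤ e + m := by linarith
          exact pow_le_pow_left₀ h0 hem 2
        have he2 : e ^ 2 ≤ ρ ^ 2 - g ^ 2 :=
          e2_bound hsq (mul_nonneg he.le hm0) hpyth hu2
        have hba : b = a + L • v := by rw [← hdir]; abel
        have hnb : ‖z₀ - b‖ ^ 2 = ‖perp v (z₀ - a)‖ ^ 2 + e ^ 2 := by
          calc ‖z₀ - b‖ ^ 2 = ‖perp v (z₀ - a) + e • v‖ ^ 2 := by
                congr 1
                rw [hperpz, hedef, hba, sub_smul]; abel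
            _ = ‖perp v (z₀ - a)‖ ^ 2 + e ^ 2 := by
                rw [norm_add_sq_real, real_inner_smul_right, perp_inner hv, mul_zero,
                  norm_smul, Real.norm_eq_abs, hv, mul_one, sq_abs]
                ring
        have hd : Metric.infDist z₀ (segment ℝ a b) ≤ dist z₀ b :=
          Metric.infDist_le_dist_of_mem (right_mem_segment ℝ a b)
        have hP2 : ‖perp v (z₀ - a)‖ ^ 2 ≤ (δ + g) ^ 2 :=
          pow_le_pow_left₀ (norm_nonneg _) hga 2
        have hdb2 : dist z₀ b ^ 2 ≤ (2 * ρ) ^ 2 := by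
          rw [dist_eq_norm, hnb]
          linarith [hP2, he2, quad_bound hδ0 hg0 hδρ hg]
        have : dist z₀ b ≤ 2 * ρ := sqrt_bound dist_nonneg (by linarith) hdb2
        linarith


lemma scaled_infDist_le {a b v : EuclideanSpace ℝ (Fin d)} (hab : a ≠ b) (hv : ‖v‖ = 1)
    (hdir : b - a = ‖b - a‖ • v) {r : ℝ} (hr : 0 < r) {lam : ℝ} (h0 : 0 ≤ lam) (h1 : lam ≤ 1)
    (p z₀ : EuclideanSpace ℝ (Fin d)) (hz : z₀ ∈ capsuleSeg a b v p r) :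
    Metric.infDist (p + lam • (z₀ - p)) (segment ℝ a b)
      ≤ (1 + lam) * max r (Metric.infDist p (segment ℝ a b)) := by
  obtain ⟨c, hc, hceq⟩ := exists_min a b p
  obtain ⟨q, hq, hqeq⟩ := exists_min a b z₀
  have hmem : (1 - lam) • c + lam • q ∈ segment ℝ a b := by
    have := (convex_segment a b) hc hq (by linarith : (0:ℝ) ≤ 1 - lam) h0 (by ring)
    exact this
  have hd : Metric.infDist (p + lam • (z₀ - p)) (segment ℝ a b)
      ≤ dist (p + lam • (z₀ - p)) ((1 - lam) • c + lam • q) :=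
    Metric.infDist_le_dist_of_mem hmem
  have hrw : (p + lam • (z₀ - p)) - ((1 - lam) • c + lam • q)
      = (1 - lam) • (p - c) + lam • (z₀ - q) := by
    module
  have hnorm : dist (p + lam • (z₀ - p)) ((1 - lam) • c + lam • q)
      ≤ (1 - lam) * dist p c + lam * dist z₀ q := by
    rw [dist_eq_norm, hrw]
    calc ‖(1 - lam) • (p - c) + lam • (z₀ - q)‖
        ≤ ‖(1 - lam) • (p - c)‖ + ‖lam • (z₀ - q)‖ := norm_add_le _ _
      _ = (1 - lam) * dist p c + lam * dist z₀ q := by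
          rw [norm_smul, norm_smul, Real.norm_eq_abs, Real.norm_eq_abs,
            abs_of_nonneg (by linarith : (0:ℝ) ≤ 1 - lam), abs_of_nonneg h0,
            dist_eq_norm, dist_eq_norm]
  have hzq : dist z₀ q ≤ 2 * max r (Metric.infDist p (segment ℝ a b)) := by
    rw [← hqeq]
    exact claimB hab hv hdir hr p z₀ hz
  have hpc : dist p c ≤ max r (Metric.infDist p (segment ℝ a b)) := by
    rw [← hceq]; exact le_max_right _ _
  have h2 : (0:ℝ) ≤ max r (Metric.infDist p (segment ℝ a b)) := le_trans hr.le (le_max_left _ _)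
  calc Metric.infDist (p + lam • (z₀ - p)) (segment ℝ a b)
      ≤ (1 - lam) * dist p c + lam * dist z₀ q := le_trans hd hnorm
    _ ≤ (1 - lam) * max r (Metric.infDist p (segment ℝ a b))
        + lam * (2 * max r (Metric.infDist p (segment ℝ a b))) := by
        have := mul_le_mul_of_nonneg_left hpc (by linarith : (0:ℝ) ≤ 1 - lam)
        have := mul_le_mul_of_nonneg_left hzq h0
        nlinarith
    _ = (1 + lam) * max r (Metric.infDist p (segment ℝ a b)) := by ring

lemma capsule_sub_ball {a b v : EuclideanSpace ℝ (Fin d)} {r : ℝ} (p z₀ : EuclideanSpace ℝ (Fin d))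
    (hz : z₀ ∈ capsuleSeg a b v p r) :
    dist z₀ p ≤ max r (min (dist p a) (dist p b)) := by
  unfold capsuleSeg at hz
  split_ifs at hz with hcase
  · have h1 : dist z₀ p ≤ max r (Metric.infDist p (segment ℝ a b)) := Metric.mem_closedBall.mp hz
    rw [hcase] at h1; exact h1
  · exact Metric.mem_closedBall.mp hz.2

lemma capsule_sub_cyl {a b v : EuclideanSpace ℝ (Fin d)} (hv : ‖v‖ = 1) {r : ℝ}
    (p z₀ : EuclideanSpace ℝ (Fin d)) (hz : z₀ ∈ capsuleSeg a b v p r) :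
    ‖perp v (z₀ - p)‖ ≤ max r (Metric.infDist p (segment ℝ a b)) := by
  unfold capsuleSeg at hz
  split_ifs at hz with hcase
  · have h1 : dist z₀ p ≤ max r (Metric.infDist p (segment ℝ a b)) := Metric.mem_closedBall.mp hz
    calc ‖perp v (z₀ - p)‖ ≤ ‖z₀ - p‖ := norm_perp_le hv _
      _ = dist z₀ p := (dist_eq_norm _ _).symm
      _ ≤ _ := h1
  · exact hz.1

lemma scaled_extract {a b v : EuclideanSpace ℝ (Fin d)} (hab : a ≠ b) (hv : ‖v‖ = 1)
    (hdir : b - a = ‖b - a‖ • v) {r lam : ℝ} (hr : 0 < r) (h0 : 0 < lam) (h1 : lam ≤ 1)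
    (p z : EuclideanSpace ℝ (Fin d)) (hz : z ∈ scaleAbout p lam (capsuleSeg a b v p r)) :
    dist z p ≤ lam * max r (min (dist p a) (dist p b)) ∧
    ‖perp v (z - p)‖ ≤ lam * max r (Metric.infDist p (segment ℝ a b)) ∧
    Metric.infDist z (segment ℝ a b) ≤ (1 + lam) * max r (Metric.infDist p (segment ℝ a b)) := by
  obtain ⟨z₀, hz₀, hzeq⟩ := hz
  have hzp : z - p = lam • (z₀ - p) := by
    rw [← hzeq, AffineMap.homothety_apply]
    simp [vsub_eq_sub, vadd_eq_add]
  have hzval : z = p + lam • (z₀ - p) := by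
    have : z - p + p = p + lam • (z₀ - p) := by rw [hzp]; abel
    simpa using this
  refine ⟨?_, ?_, ?_⟩
  · rw [dist_eq_norm, hzp, norm_smul, Real.norm_eq_abs, abs_of_nonneg h0.le]
    exact mul_le_mul_of_nonneg_left (by rw [← dist_eq_norm]; exact capsule_sub_ball p z₀ hz₀) h0.le
  · rw [hzp, perp_smul, norm_smul, Real.norm_eq_abs, abs_of_nonneg h0.le]
    exact mul_le_mul_of_nonneg_left (capsule_sub_cyl hv p z₀ hz₀) h0.le
  · rw [hzval]
    exact scaled_infDist_le hab hv hdir hr h0.le h1 p z₀ hz₀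

lemma mem_scaled_capsule {a b v : EuclideanSpace ℝ (Fin d)} {r mu : ℝ} (hr : 0 < r)
    (hmu : 0 < mu) (p w : EuclideanSpace ℝ (Fin d))
    (h1 : dist w p ≤ mu * max r (min (dist p a) (dist p b)))
    (h2 : ‖perp v (w - p)‖ ≤ mu * max r (Metric.infDist p (segment ℝ a b))) :
    w ∈ scaleAbout p mu (capsuleSeg a b v p r) := by
  refine ⟨p + mu⁻¹ • (w - p), ?_, ?_⟩
  · have hd : dist (p + mu⁻¹ • (w - p)) p ≤ max r (min (dist p a) (dist p b)) := by
      rw [dist_eq_norm, add_sub_cancel_left, norm_smul, Real.norm_eq_abs,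
        abs_of_nonneg (inv_nonneg.mpr hmu.le), ← dist_eq_norm]
      rw [inv_mul_le_iff₀ hmu]
      exact h1
    have hp : ‖perp v ((p + mu⁻¹ • (w - p)) - p)‖ ≤ max r (Metric.infDist p (segment ℝ a b)) := by
      rw [add_sub_cancel_left, perp_smul, norm_smul, Real.norm_eq_abs,
        abs_of_nonneg (inv_nonneg.mpr hmu.le)]
      rw [inv_mul_le_iff₀ hmu]
      exact h2
    unfold capsuleSeg
    split_ifs with hcase
    · rw [Metric.mem_closedBall]
      calc dist (p + mu⁻¹ • (w - p)) p ≤ max r (min (dist p a) (dist p b)) := hd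
        _ = max r (Metric.infDist p (segment ℝ a b)) := by rw [hcase]
    · exact ⟨hp, Metric.mem_closedBall.mpr hd⟩
  · rw [AffineMap.homothety_apply]
    simp only [vsub_eq_sub, vadd_eq_add, add_sub_cancel_left, smul_smul,
      mul_inv_cancel₀ hmu.ne', one_smul]
    abel

set_option maxHeartbeats 1000000 in
/-- **Single-segment Expansion-Containment.** For a single
segment `s = [a,b]`, if `C_s^λ(x, r)` and `C_s^λ(y, r)` overlap, then
`C_s^λ(y, r) ⊆ C_s^{αλ}(x, r)` with `α = (3+λ)/(1-λ)`. -/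
theorem capsuleSeg_expansion_containment {d : ℕ} (hd : 1 ≤ d)
    (a b v : EuclideanSpace ℝ (Fin d))
    (hab : a ≠ b)
    (hv : ‖v‖ = 1)
    (hdir : b - a = ‖b - a‖ • v)
    (r : ℝ) (hr : 0 < r) (lam : ℝ) (hlam0 : 0 < lam) (hlam1 : lam < 1)
    (x y : EuclideanSpace ℝ (Fin d))
    (hmeet : (scaleAbout x lam (capsuleSeg a b v x r) ∩
        scaleAbout y lam (capsuleSeg a b v y r)).Nonempty) :
    scaleAbout y lam (capsuleSeg a b v y r) ⊆
      scaleAbout x ((3 + lam) / (1 - lam) * lam) (capsuleSeg a b v x r) := by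
  obtain ⟨z, hzx, hzy⟩ := hmeet
  intro w hw
  obtain ⟨hzx1, hzx2, hzx3⟩ := scaled_extract hab hv hdir hr hlam0 hlam1.le x z hzx
  obtain ⟨hzy1, hzy2, hzy3⟩ := scaled_extract hab hv hdir hr hlam0 hlam1.le y z hzy
  obtain ⟨hw1, hw2, hw3⟩ := scaled_extract hab hv hdir hr hlam0 hlam1.le y w hw
  set s := segment ℝ a b with hsdef
  set δx := Metric.infDist x s with hδxdef
  set δy := Metric.infDist y s with hδydef
  set mx := min (dist x a) (dist x b) with hmxdef
  set my := min (dist y a) (dist y b) with hmydef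
  set ρx := max r δx with hρxdef
  set ρy := max r δy with hρydef
  set Rx := max r mx with hRxdef
  set Ry := max r my with hRydef
  have hδmx : δx ≤ mx := le_min (Metric.infDist_le_dist_of_mem (left_mem_segment ℝ a b))
    (Metric.infDist_le_dist_of_mem (right_mem_segment ℝ a b))
  have hδmy : δy ≤ my := le_min (Metric.infDist_le_dist_of_mem (left_mem_segment ℝ a b))
    (Metric.infDist_le_dist_of_mem (right_mem_segment ℝ a b))
  have hρRx : ρx ≤ Rx := max_le_max le_rfl hδmx
  have hρRy : ρy ≤ Ry := max_le_max le_rfl hδmy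
  have hrρx : r ≤ ρx := le_max_left _ _
  have hrρy : r ≤ ρy := le_max_left _ _
  have hρx0 : 0 < ρx := lt_of_lt_of_le hr hrρx
  have hρy0 : 0 < ρy := lt_of_lt_of_le hr hrρy
  have hRx0 : 0 < Rx := lt_of_lt_of_le hρx0 hρRx
  have hRy0 : 0 < Ry := lt_of_lt_of_le hρy0 hρRy
  have h1l : (0:ℝ) < 1 - lam := by linarith
  -- B1 : (1-lam) Ry ≤ (1+lam) Rx
  have hxy : dist x y ≤ lam * Rx + lam * Ry := by
    calc dist x y ≤ dist x z + dist z y := dist_triangle _ _ _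
      _ = dist z x + dist z y := by rw [dist_comm x z]
      _ ≤ lam * Rx + lam * Ry := add_le_add hzx1 hzy1
  have hmyx : my ≤ mx + dist x y := by
    have h1 : dist y a ≤ dist x a + dist x y := by
      have h := dist_triangle y x a
      rw [dist_comm y x] at h
      linarith
    have h2 : dist y b ≤ dist x b + dist x y := by
      have h := dist_triangle y x b
      rw [dist_comm y x] at h
      linarith
    have := min_le_min h1 h2
    calc my ≤ min (dist x a + dist x y) (dist x b + dist x y) := this
      _ = mx + dist x y := by rw [min_add_add_right]
  have hB1 : (1 - lam) * Ry ≤ (1 + lam) * Rx := by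
    have hD0 : (0:ℝ) ≤ lam * Rx + lam * Ry := by positivity
    have hstep : Ry ≤ Rx + (lam * Rx + lam * Ry) := by
      have h1 : Ry ≤ max r (mx + (lam * Rx + lam * Ry)) :=
        max_le_max le_rfl (le_trans hmyx (by linarith))
      refine le_trans h1 (max_le ?_ ?_)
      · exact le_trans (le_max_left r mx) (le_add_of_nonneg_right hD0)
      · exact add_le_add_left (le_max_right r mx) _
    linarith
  -- B2 : (1-lam) ρy ≤ (1+lam) ρx
  have hB2 : (1 - lam) * ρy ≤ (1 + lam) * ρx := by
    have hkey : δy ≤ lam * ρy + (1 + lam) * ρx := by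
      by_cases hy : Metric.infDist y (segment ℝ a b) = min (dist y a) (dist y b)
      · have hRyρy : Ry = ρy := by
          rw [hRydef, hρydef, hδydef, hmydef]
          rw [show Metric.infDist y s = min (dist y a) (dist y b) from hy]
        have hst : δy ≤ Metric.infDist z s + dist y z := Metric.infDist_le_infDist_add_dist
        have hdyz : dist y z ≤ lam * Ry := by rw [dist_comm]; exact hzy1
        calc δy ≤ Metric.infDist z s + dist y z := hst
          _ ≤ (1 + lam) * ρx + lam * Ry := add_le_add hzx3 hdyz
          _ = lam * ρy + (1 + lam) * ρx := by rw [hRyρy]; ring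
      · obtain ⟨_, _, hδyeq⟩ := cyl_char hab hv hdir y hy
        have hsplit : perp v (y - a) = perp v (y - z) + perp v (z - x) + perp v (x - a) := by
          rw [← perp_add, ← perp_add]
          congr 1
          abel
        have hyz : ‖perp v (y - z)‖ ≤ lam * ρy := by
          have hne : perp v (y - z) = - perp v (z - y) := by
            rw [← perp_neg]
            congr 1
            abel
          rw [hne, norm_neg]
          exact hzy2
        have hpxa : ‖perp v (x - a)‖ ≤ δx := Pline hv hdir x
        have hδxρx : δx ≤ ρx := le_max_right _ _
        calc δy = ‖perp v (y - a)‖ := hδyeq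
          _ = ‖perp v (y - z) + perp v (z - x) + perp v (x - a)‖ := by rw [← hsplit]
          _ ≤ ‖perp v (y - z)‖ + ‖perp v (z - x)‖ + ‖perp v (x - a)‖ := norm_add₃_le
          _ ≤ lam * ρy + lam * ρx + δx := add_le_add (add_le_add hyz hzx2) hpxa
          _ ≤ lam * ρy + (1 + lam) * ρx := by linarith
    have hρyb : ρy ≤ lam * ρy + (1 + lam) * ρx := by
      have hrhs : r ≤ lam * ρy + (1 + lam) * ρx := by nlinarith
      exact max_le hrhs hkey
    linarith
  -- C1 and C2
  have hC1 : dist w x ≤ lam * Rx + 2 * (lam * Ry) := by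
    have hyz : dist y z ≤ lam * Ry := by rw [dist_comm]; exact hzy1
    calc dist w x ≤ dist w y + dist y z + dist z x := dist_triangle4 _ _ _ _
      _ ≤ lam * Ry + lam * Ry + lam * Rx := add_le_add (add_le_add hw1 hyz) hzx1
      _ = lam * Rx + 2 * (lam * Ry) := by ring
  have hC2 : ‖perp v (w - x)‖ ≤ lam * ρx + 2 * (lam * ρy) := by
    have hsplit : perp v (w - x) = perp v (w - y) + perp v (y - z) + perp v (z - x) := by
      rw [← perp_add, ← perp_add]
      congr 1
      abel
    have hyz : ‖perp v (y - z)‖ ≤ lam * ρy := by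
      have hne : perp v (y - z) = - perp v (z - y) := by
        rw [← perp_neg]
        congr 1
        abel
      rw [hne, norm_neg]
      exact hzy2
    calc ‖perp v (w - x)‖ = ‖perp v (w - y) + perp v (y - z) + perp v (z - x)‖ := by rw [← hsplit]
      _ ≤ ‖perp v (w - y)‖ + ‖perp v (y - z)‖ + ‖perp v (z - x)‖ := norm_add₃_le
      _ ≤ lam * ρy + lam * ρy + lam * ρx := add_le_add (add_le_add hw2 hyz) hzx2
      _ = lam * ρx + 2 * (lam * ρy) := by ring
  -- conclude
  have hmu : (0:ℝ) < (3 + lam) / (1 - lam) * lam := by positivity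
  refine mem_scaled_capsule hr hmu x w ?_ ?_
  · have hfin : lam * Rx + 2 * (lam * Ry) ≤ (3 + lam) / (1 - lam) * lam * Rx := by
      rw [div_mul_eq_mul_div, div_mul_eq_mul_div, le_div_iff₀ h1l]
      nlinarith [mul_le_mul_of_nonneg_left hB1 (by positivity : (0:ℝ) ≤ 2 * lam)]
    exact le_trans hC1 hfin
  · have hfin : lam * ρx + 2 * (lam * ρy) ≤ (3 + lam) / (1 - lam) * lam * ρx := by
      rw [div_mul_eq_mul_div, div_mul_eq_mul_div, le_div_iff₀ h1l]
      nlinarith [mul_le_mul_of_nonneg_left hB2 (by positivity : (0:ℝ) ≤ 2 * lam)]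
    exact le_trans hC2 hfin
end
end

section
/- Let 0 < λ < 1 and x ∈ ℝᵈ. For every z ∈ C^λ(x, φ(x)), the local feature size satisfies (1 − λ)·φ(x) ≤ φ(z) ≤ (1 + λ)·φ(x). -/
noncomputable section

open Metric Set MeasureTheory
open scoped InnerProductSpace Classical

variable {d n : ℕ}

lemma le_infDist_aux {s : Set (EuclideanSpace ℝ (Fin d))} (hs : s.Nonempty)
    {x : EuclideanSpace ℝ (Fin d)} {c : ℝ} (h : ∀ y ∈ s, c ≤ dist x y) :
    c ≤ Metric.infDist x s := by
  by_contra hlt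
  push_neg at hlt
  obtain ⟨y, hy, hd⟩ := (Metric.infDist_lt_iff hs).1 hlt
  exact absurd (h y hy) (by linarith)

lemma le_of_sq_le_sq' {a b : ℝ} (hb : 0 ≤ b) (h : a ^ 2 ≤ b ^ 2) (ha : 0 ≤ a) : a ≤ b := by
  nlinarith

lemma pyth_aux (v : EuclideanSpace ℝ (Fin d)) (hv : ‖v‖ = 1)
    (w : EuclideanSpace ℝ (Fin d)) (hw : ⟪w, v⟫_ℝ = 0) (c : ℝ) :
    ‖w + c • v‖ ^ 2 = ‖w‖ ^ 2 + c ^ 2 := by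
  rw [norm_add_sq_real, real_inner_smul_right, hw, norm_smul, hv]
  simp [mul_pow, sq_abs]

lemma dist_point_seg (a v y : EuclideanSpace ℝ (Fin d)) (hv : ‖v‖ = 1) (τ : ℝ) :
    dist y (a + τ • v) ^ 2
      = ‖(y - a) - ⟪y - a, v⟫_ℝ • v‖ ^ 2 + (⟪y - a, v⟫_ℝ - τ) ^ 2 := by
  have hperp : ⟪(y - a) - ⟪y - a, v⟫_ℝ • v, v⟫_ℝ = 0 := by
    rw [inner_sub_left, real_inner_smul_left, real_inner_self_eq_norm_sq, hv]
    ring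
  have h : y - (a + τ • v) = ((y - a) - ⟪y - a, v⟫_ℝ • v) + (⟪y - a, v⟫_ℝ - τ) • v := by
    module
  rw [dist_eq_norm, h, pyth_aux v hv _ hperp]

lemma seg_mem_param (a b v : EuclideanSpace ℝ (Fin d)) {L : ℝ} (hdir : b - a = L • v)
    (hL : 0 ≤ L) {q : EuclideanSpace ℝ (Fin d)} (hq : q ∈ segment ℝ a b) :
    ∃ τ, 0 ≤ τ ∧ τ ≤ L ∧ q = a + τ • v := by
  rw [segment_eq_image'] at hq
  obtain ⟨θ, ⟨h0, h1⟩, rfl⟩ := hq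
  refine ⟨θ * L, by positivity, by nlinarith, ?_⟩
  simp only [hdir, smul_smul]

lemma param_mem_seg (a b v : EuclideanSpace ℝ (Fin d)) {L : ℝ} (hdir : b - a = L • v)
    (hL : 0 < L) {τ : ℝ} (h0 : 0 ≤ τ) (h1 : τ ≤ L) :
    a + τ • v ∈ segment ℝ a b := by
  rw [segment_eq_image']
  refine ⟨τ / L, ⟨by positivity, by rw [div_le_one hL]; exact h1⟩, ?_⟩
  simp only [hdir, smul_smul, div_mul_cancel₀ _ (ne_of_gt hL)]

lemma perp_le_infDist (a b v y : EuclideanSpace ℝ (Fin d)) (hv : ‖v‖ = 1)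
    {L : ℝ} (hdir : b - a = L • v) (hL : 0 ≤ L) :
    ‖(y - a) - ⟪y - a, v⟫_ℝ • v‖ ≤ Metric.infDist y (segment ℝ a b) := by
  apply le_infDist_aux ⟨a, left_mem_segment ℝ a b⟩
  intro q hq
  obtain ⟨τ, h0, h1, rfl⟩ := seg_mem_param a b v hdir hL hq
  apply le_of_sq_le_sq' dist_nonneg _ (norm_nonneg _)
  rw [dist_point_seg a v y hv τ]
  nlinarith [sq_nonneg (⟪y - a, v⟫_ℝ - τ)]


lemma dist_endpoint_a (a v x : EuclideanSpace ℝ (Fin d)) (hv : ‖v‖ = 1) :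
    dist x a ^ 2 = ‖(x - a) - ⟪x - a, v⟫_ℝ • v‖ ^ 2 + ⟪x - a, v⟫_ℝ ^ 2 := by
  have := dist_point_seg a v x hv 0
  simpa using this

lemma dist_endpoint_b (a b v x : EuclideanSpace ℝ (Fin d)) (hv : ‖v‖ = 1)
    {L : ℝ} (hdir : b - a = L • v) :
    dist x b ^ 2 = ‖(x - a) - ⟪x - a, v⟫_ℝ • v‖ ^ 2 + (⟪x - a, v⟫_ℝ - L) ^ 2 := by
  have hb : b = a + L • v := by rw [← hdir]; abel
  rw [hb, dist_point_seg a v x hv L]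

lemma interior_char (a b v x : EuclideanSpace ℝ (Fin d)) (hv : ‖v‖ = 1)
    {L : ℝ} (hdir : b - a = L • v) (hL : 0 < L)
    (hne : Metric.infDist x (segment ℝ a b) ≠ min (dist x a) (dist x b)) :
    Metric.infDist x (segment ℝ a b) = ‖(x - a) - ⟪x - a, v⟫_ℝ • v‖ ∧
      0 ≤ ⟪x - a, v⟫_ℝ ∧ ⟪x - a, v⟫_ℝ ≤ L := by
  set P := ⟪x - a, v⟫_ℝ with hP
  set Wn := ‖(x - a) - P • v‖ with hWn
  have hWn0 : 0 ≤ Wn := norm_nonneg _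
  have h1 : Metric.infDist x (segment ℝ a b) ≤ dist x a :=
    Metric.infDist_le_dist_of_mem (left_mem_segment ℝ a b)
  have h2 : Metric.infDist x (segment ℝ a b) ≤ dist x b :=
    Metric.infDist_le_dist_of_mem (right_mem_segment ℝ a b)
  have hlt : Metric.infDist x (segment ℝ a b) < min (dist x a) (dist x b) :=
    (le_min h1 h2).lt_of_ne hne
  have ha2 := dist_endpoint_a a v x hv
  have hb2 := dist_endpoint_b a b v x hv hdir
  have hWle : Wn ≤ Metric.infDist x (segment ℝ a b) := perp_le_infDist a b v x hv hdir hL.le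
  rcases lt_or_ge P 0 with hPneg | hP0
  · exfalso
    have : dist x a ≤ Metric.infDist x (segment ℝ a b) := by
      apply le_infDist_aux ⟨a, left_mem_segment ℝ a b⟩
      intro q hq
      obtain ⟨τ, h0, h1', rfl⟩ := seg_mem_param a b v hdir hL.le hq
      apply le_of_sq_le_sq' dist_nonneg _ dist_nonneg
      rw [dist_point_seg a v x hv τ, ha2]
      nlinarith
    have := min_le_left (dist x a) (dist x b)
    linarith
  rcases lt_or_ge L P with hPL | hPL'
  · exfalso
    have : dist x b ≤ Metric.infDist x (segment ℝ a b) := by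
      apply le_infDist_aux ⟨a, left_mem_segment ℝ a b⟩
      intro q hq
      obtain ⟨τ, h0, h1', rfl⟩ := seg_mem_param a b v hdir hL.le hq
      apply le_of_sq_le_sq' dist_nonneg _ dist_nonneg
      rw [dist_point_seg a v x hv τ, hb2]
      nlinarith
    have := min_le_right (dist x a) (dist x b)
    linarith
  refine ⟨le_antisymm ?_ hWle, hP0, hPL'⟩
  have hmem : a + P • v ∈ segment ℝ a b := param_mem_seg a b v hdir hL hP0 hPL'
  have hle := Metric.infDist_le_dist_of_mem (x := x) hmem
  have : dist x (a + P • v) = Wn := by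
    apply le_antisymm
    · apply le_of_sq_le_sq' hWn0 _ dist_nonneg
      rw [dist_point_seg a v x hv P]; simp only [← hP, ← hWn]; nlinarith
    · apply le_of_sq_le_sq' dist_nonneg _ hWn0
      rw [dist_point_seg a v x hv P]; simp only [← hP, ← hWn]; nlinarith
  linarith

lemma final_ineq {D s0 γ r m lam : ℝ} (hD : 0 ≤ D) (hs0 : 0 ≤ s0) (hγ : 0 ≤ γ)
    (hr : 0 ≤ r) (hl0 : 0 ≤ lam) (hl1 : lam ≤ 1)
    (hs0R : s0 ≤ lam * max r D) (hm2 : m ^ 2 = D ^ 2 + γ ^ 2) :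
    (D + s0) ^ 2 + lam ^ 2 * (max r m) ^ 2 - s0 ^ 2 - γ ^ 2
      ≤ (D + lam * max r D) ^ 2 := by
  have hDR : D ≤ max r D := le_max_right r D
  have hrR : r ≤ max r D := le_max_left r D
  have hR0 : 0 ≤ max r D := le_trans hr hrR
  have h1 : D * s0 ≤ D * (lam * max r D) := mul_le_mul_of_nonneg_left hs0R hD
  have h2 : r ^ 2 ≤ (max r D) ^ 2 := by nlinarith
  have h3 : lam ^ 2 * r ^ 2 ≤ lam ^ 2 * (max r D) ^ 2 :=
    mul_le_mul_of_nonneg_left h2 (sq_nonneg lam)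
  have h4 : D ^ 2 ≤ (max r D) ^ 2 := by nlinarith
  have h5 : lam ^ 2 * D ^ 2 ≤ lam ^ 2 * (max r D) ^ 2 :=
    mul_le_mul_of_nonneg_left h4 (sq_nonneg lam)
  have h6 : 0 ≤ (1 - lam ^ 2) * γ ^ 2 :=
    mul_nonneg (by nlinarith) (sq_nonneg γ)
  rcases max_cases r m with ⟨hM, _⟩ | ⟨hM, _⟩ <;> rw [hM] <;> nlinarith


lemma sq_cmp1 {dA dB D P L : ℝ} (hA : dA ^ 2 = D ^ 2 + P ^ 2)
    (hB : dB ^ 2 = D ^ 2 + (P - L) ^ 2) (h : P ≤ L - P) (hP : 0 ≤ P) :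
    dA ^ 2 ≤ dB ^ 2 := by nlinarith

lemma sq_cmp2 {dA dB D P L : ℝ} (hA : dA ^ 2 = D ^ 2 + P ^ 2)
    (hB : dB ^ 2 = D ^ 2 + (P - L) ^ 2) (h : L - P ≤ P) (hQ : 0 ≤ L - P) :
    dB ^ 2 ≤ dA ^ 2 := by nlinarith

lemma he2_case1 {z P γ : ℝ} (hc : z ≤ 0) (hγP : γ ≤ P) (hγ : 0 ≤ γ) (hP : 0 ≤ P) :
    z ^ 2 ≤ (z - P) ^ 2 - γ ^ 2 := by nlinarith

lemma he2_case2 {z P L γ : ℝ} (hc : L ≤ z) (hγP : γ ≤ L - P) (hγ : 0 ≤ γ) :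
    (z - L) ^ 2 ≤ (z - P) ^ 2 - γ ^ 2 := by nlinarith

lemma fin_case1 {W E D s R' : ℝ} (hW : W ≤ D + s) (hW0 : 0 ≤ W) (hE : E ≤ 0)
    (hD : 0 ≤ D) (hs : 0 ≤ s) (hsR : s ≤ R') (hR' : 0 ≤ R') :
    W ^ 2 + E ≤ (D + R') ^ 2 := by nlinarith

lemma fin_case2 {W E T s g M2 D R' : ℝ} (hW : W ≤ D + s) (hW0 : 0 ≤ W)
    (hE : E ≤ T - g) (hT : T + s ^ 2 ≤ M2)
    (hF : (D + s) ^ 2 + M2 - s ^ 2 - g ≤ (D + R') ^ 2) (hD : 0 ≤ D) (hs : 0 ≤ s) :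
    W ^ 2 + E ≤ (D + R') ^ 2 := by nlinarith

lemma low_helper {φ Dx Dz lam : ℝ} (h : φ ≤ Dx) (h1 : Dx - lam * Dx ≤ Dz)
    (hl1 : lam ≤ 1) : (1 - lam) * φ ≤ Dz := by nlinarith

set_option maxHeartbeats 2000000 in
lemma capsule_bound (a b v x y z : EuclideanSpace ℝ (Fin d)) (hab : a ≠ b)
    (hv : ‖v‖ = 1) (hdir : b - a = ‖b - a‖ • v) (r lam : ℝ) (hr : 0 ≤ r)
    (hl0 : 0 ≤ lam) (hl1 : lam ≤ 1)
    (hy : y ∈ capsuleSeg a b v x r) (hz : z - x = lam • (y - x)) :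
    Metric.infDist x (segment ℝ a b) - lam * max r (Metric.infDist x (segment ℝ a b))
      ≤ Metric.infDist z (segment ℝ a b) ∧
    Metric.infDist z (segment ℝ a b)
      ≤ Metric.infDist x (segment ℝ a b) + lam * max r (Metric.infDist x (segment ℝ a b)) := by
  have hL : 0 < ‖b - a‖ := by
    simpa [norm_pos_iff, sub_ne_zero] using (sub_ne_zero.2 hab.symm)
  set L : ℝ := ‖b - a‖ with hLdef
  set D : ℝ := Metric.infDist x (segment ℝ a b) with hDdef
  have hD0 : 0 ≤ D := Metric.infDist_nonneg
  have hdzx : dist z x = lam * dist y x := by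
    rw [dist_eq_norm, dist_eq_norm, hz, norm_smul]
    simp [abs_of_nonneg hl0]
  unfold capsuleSeg at hy
  split_ifs at hy with hcond
  · -- endpoint case
    rw [Metric.mem_closedBall, ← hDdef] at hy
    have hdz : dist z x ≤ lam * max r D := by
      rw [hdzx]
      exact mul_le_mul_of_nonneg_left hy hl0
    constructor
    · have := Metric.infDist_le_infDist_add_dist
        (x := x) (y := z) (s := segment ℝ a b)
      rw [← hDdef] at this
      rw [dist_comm] at this
      linarith
    · have := Metric.infDist_le_infDist_add_dist
        (x := z) (y := x) (s := segment ℝ a b)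
      rw [← hDdef] at this
      linarith
  · -- interior case
    obtain ⟨hyCyl, hyBall⟩ := hy
    rw [Set.mem_setOf_eq, ← hDdef] at hyCyl
    rw [Metric.mem_closedBall] at hyBall
    obtain ⟨hDW, hP0, hPL⟩ := interior_char a b v x hv hdir hL hcond
    rw [← hDdef] at hDW
    set Px : ℝ := ⟪x - a, v⟫_ℝ with hPxdef
    set Pz : ℝ := ⟪z - a, v⟫_ℝ with hPzdef
    set Wx : EuclideanSpace ℝ (Fin d) := (x - a) - Px • v with hWxdef
    set Wz : EuclideanSpace ℝ (Fin d) := (z - a) - Pz • v with hWzdef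
    have hinnerzx : ⟪z - x, v⟫_ℝ = Pz - Px := by
      have h1 : z - x = (z - a) - (x - a) := by abel
      rw [h1, inner_sub_left]
    have hinneryx : ⟪y - x, v⟫_ℝ = ⟪y - a, v⟫_ℝ - Px := by
      have h1 : y - x = (y - a) - (x - a) := by abel
      rw [h1, inner_sub_left]
    have hWzx : Wz - Wx = lam • ((y - x) - ⟪y - x, v⟫_ℝ • v) := by
      have h2 : Pz - Px = lam * ⟪y - x, v⟫_ℝ := by
        rw [← hinnerzx, hz, real_inner_smul_left]
      have h3 : Wz - Wx = (z - x) - (Pz - Px) • v := by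
        rw [hWzdef, hWxdef]; module
      rw [h3, h2, hz]; module
    set s0 : ℝ := ‖Wz - Wx‖ with hs0def
    have hs0 : 0 ≤ s0 := norm_nonneg _
    have hs0R : s0 ≤ lam * max r D := by
      rw [hs0def, hWzx, norm_smul, Real.norm_eq_abs, abs_of_nonneg hl0]
      exact mul_le_mul_of_nonneg_left hyCyl hl0
    -- Pythagoras for z - x
    have hWzv : ⟪Wz - Wx, v⟫_ℝ = 0 := by
      rw [hWzx, real_inner_smul_left, inner_sub_left, real_inner_smul_left,
        real_inner_self_eq_norm_sq, hv]
      ring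
    have hpyzx : ‖z - x‖ ^ 2 = s0 ^ 2 + (Pz - Px) ^ 2 := by
      have h3' : Wz - Wx = (z - x) - (Pz - Px) • v := by
        rw [hWzdef, hWxdef]; module
      have h1 : z - x = (Wz - Wx) + (Pz - Px) • v := by rw [h3']; abel
      rw [h1, pyth_aux v hv _ hWzv]
    set m : ℝ := min (dist x a) (dist x b) with hmdef
    have hm0 : 0 ≤ m := le_min dist_nonneg dist_nonneg
    have hzxm : ‖z - x‖ ≤ lam * max r m := by
      rw [← dist_eq_norm, hdzx]
      exact mul_le_mul_of_nonneg_left hyBall hl0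
    have ht : (Pz - Px) ^ 2 + s0 ^ 2 ≤ lam ^ 2 * (max r m) ^ 2 := by
      have h1 : ‖z - x‖ ^ 2 ≤ (lam * max r m) ^ 2 :=
        pow_le_pow_left₀ (norm_nonneg _) hzxm 2
      rw [hpyzx, mul_pow] at h1
      linarith
    set γ : ℝ := min Px (L - Px) with hγdef
    have hγ0 : 0 ≤ γ := le_min hP0 (by linarith)
    have haA := dist_endpoint_a a v x hv
    have hbA := dist_endpoint_b a b v x hv hdir
    rw [← hPxdef, ← hWxdef, ← hDW] at haA hbA
    clear_value L D Px Pz Wx Wz s0 m γ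
    have hm2 : m ^ 2 = D ^ 2 + γ ^ 2 := by
      rcases le_total Px (L - Px) with h | h
      · have hγe : γ = Px := by rw [hγdef]; exact min_eq_left h
        have hdab : dist x a ≤ dist x b :=
          le_of_sq_le_sq' dist_nonneg (sq_cmp1 haA hbA h hP0) dist_nonneg
        rw [hmdef, min_eq_left hdab, hγe]; linarith
      · have hγe : γ = L - Px := by rw [hγdef]; exact min_eq_right h
        have hdab : dist x b ≤ dist x a :=
          le_of_sq_le_sq' dist_nonneg (sq_cmp2 haA hbA h (by linarith)) dist_nonneg
        rw [hmdef, min_eq_right hdab, hγe]; linarith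
    -- lower bound
    have habs := abs_le.1 (abs_norm_sub_norm_le Wz Wx)
    rw [← hs0def] at habs
    have hWzle : D - s0 ≤ ‖Wz‖ := by rw [hDW]; linarith [habs.1]
    have hlower : D - lam * max r D ≤ Metric.infDist z (segment ℝ a b) := by
      have h1 : ‖Wz‖ ≤ Metric.infDist z (segment ℝ a b) := by
        have := perp_le_infDist a b v z hv hdir hL.le
        rwa [← hPzdef, ← hWzdef] at this
      linarith
    refine ⟨hlower, ?_⟩
    -- upper bound
    set τ : ℝ := max 0 (min Pz L) with hτdef
    have hτ0 : 0 ≤ τ := le_max_left _ _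
    have hτL : τ ≤ L := max_le hL.le (min_le_right _ _)
    have hqmem : a + τ • v ∈ segment ℝ a b := param_mem_seg a b v hdir hL hτ0 hτL
    have hqle : Metric.infDist z (segment ℝ a b) ≤ dist z (a + τ • v) :=
      Metric.infDist_le_dist_of_mem hqmem
    have hdq : dist z (a + τ • v) ^ 2 = ‖Wz‖ ^ 2 + (Pz - τ) ^ 2 := by
      have := dist_point_seg a v z hv τ
      rwa [← hPzdef, ← hWzdef] at this
    have hWzub : ‖Wz‖ ≤ D + s0 := by
      rw [hDW]; linarith [habs.2]
    have he2 : (Pz - τ) ^ 2 ≤ max 0 ((Pz - Px) ^ 2 - γ ^ 2) := by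
      rcases le_or_gt Pz 0 with hc | hc
      · have hτe : τ = 0 := by
          rw [hτdef, min_eq_left (le_trans hc hL.le), max_eq_left hc]
        have hγPx : γ ≤ Px := by rw [hγdef]; exact min_le_left _ _
        rw [hτe]
        refine le_max_of_le_right ?_
        have := he2_case1 hc hγPx hγ0 hP0
        calc (Pz - 0) ^ 2 = Pz ^ 2 := by ring
        _ ≤ (Pz - Px) ^ 2 - γ ^ 2 := this
      rcases le_or_gt Pz L with hc2 | hc2
      · have hτe : τ = Pz := by
          rw [hτdef, min_eq_left hc2, max_eq_right hc.le]
        rw [hτe]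
        simp
      · have hτe : τ = L := by
          rw [hτdef, min_eq_right hc2.le, max_eq_right hL.le]
        have hγPx : γ ≤ L - Px := by rw [hγdef]; exact min_le_right _ _
        rw [hτe]
        refine le_max_of_le_right ?_
        exact he2_case2 hc2.le hγPx hγ0
    have hfin : dist z (a + τ • v) ^ 2 ≤ (D + lam * max r D) ^ 2 := by
      rw [hdq]
      rcases le_total ((Pz - Px) ^ 2 - γ ^ 2) 0 with hcase | hcase
      · have h5 : (Pz - τ) ^ 2 ≤ 0 := le_trans he2 (by rw [max_eq_left hcase])
        have hRn : 0 ≤ lam * max r D := mul_nonneg hl0 (le_trans hr (le_max_left _ _))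
        exact fin_case1 hWzub (norm_nonneg _) h5 hD0 hs0 hs0R hRn
      · have h5 : (Pz - τ) ^ 2 ≤ (Pz - Px) ^ 2 - γ ^ 2 :=
          le_trans he2 (by rw [max_eq_right hcase])
        have hF := final_ineq hD0 hs0 hγ0 hr hl0 hl1 hs0R hm2
        exact fin_case2 hWzub (norm_nonneg _) h5 ht hF hD0 hs0
    refine le_trans hqle ?_
    refine le_of_sq_le_sq' ?_ hfin dist_nonneg
    have : 0 ≤ lam * max r D := mul_nonneg hl0 (le_trans hr (le_max_left _ _))
    linarith

lemma lfs_set_finite (a b : Fin n → EuclideanSpace ℝ (Fin d)) (x : EuclideanSpace ℝ (Fin d)) :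
    {t | ∃ i j : Fin n, i < j ∧
      t = max (Metric.infDist x (segment ℝ (a i) (b i)))
              (Metric.infDist x (segment ℝ (a j) (b j)))}.Finite := by
  apply Set.Finite.subset (Set.finite_range
    (fun p : Fin n × Fin n => max (Metric.infDist x (segment ℝ (a p.1) (b p.1)))
      (Metric.infDist x (segment ℝ (a p.2) (b p.2)))))
  rintro t ⟨i, j, hij, rfl⟩
  exact ⟨(i, j), rfl⟩

lemma lfs_set_nonempty (hn : 2 ≤ n) (a b : Fin n → EuclideanSpace ℝ (Fin d))
    (x : EuclideanSpace ℝ (Fin d)) :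
    {t | ∃ i j : Fin n, i < j ∧
      t = max (Metric.infDist x (segment ℝ (a i) (b i)))
              (Metric.infDist x (segment ℝ (a j) (b j)))}.Nonempty := by
  refine ⟨_, ⟨⟨0, by omega⟩, ⟨1, by omega⟩, ?_, rfl⟩⟩
  simp [Fin.lt_def]

lemma lfs_le_mem (hn : 2 ≤ n) {a b : Fin n → EuclideanSpace ℝ (Fin d)}
    {x : EuclideanSpace ℝ (Fin d)} {t : ℝ}
    (h : ∃ i j : Fin n, i < j ∧
      t = max (Metric.infDist x (segment ℝ (a i) (b i)))
              (Metric.infDist x (segment ℝ (a j) (b j)))) :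
    lfs a b x ≤ t := csInf_le (lfs_set_finite a b x).bddBelow h

lemma le_lfs (hn : 2 ≤ n) {a b : Fin n → EuclideanSpace ℝ (Fin d)}
    {x : EuclideanSpace ℝ (Fin d)} {c : ℝ}
    (h : ∀ i j : Fin n, i < j →
      c ≤ max (Metric.infDist x (segment ℝ (a i) (b i)))
              (Metric.infDist x (segment ℝ (a j) (b j)))) :
    c ≤ lfs a b x := by
  refine le_csInf (lfs_set_nonempty hn a b x) ?_
  rintro t ⟨i, j, hij, rfl⟩
  exact h i j hij

lemma lfs_attained (hn : 2 ≤ n) (a b : Fin n → EuclideanSpace ℝ (Fin d))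
    (x : EuclideanSpace ℝ (Fin d)) :
    ∃ i j : Fin n, i < j ∧
      lfs a b x = max (Metric.infDist x (segment ℝ (a i) (b i)))
              (Metric.infDist x (segment ℝ (a j) (b j))) :=
  Set.Nonempty.csInf_mem (lfs_set_nonempty hn a b x) (lfs_set_finite a b x)

lemma lfs_nonneg (hn : 2 ≤ n) (a b : Fin n → EuclideanSpace ℝ (Fin d))
    (x : EuclideanSpace ℝ (Fin d)) : 0 ≤ lfs a b x := by
  refine le_lfs hn fun i j hij => ?_
  exact le_trans Metric.infDist_nonneg (le_max_left _ _)

/-- For every `z ∈ C^λ(x, φ(x))`,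
`(1 − λ)φ(x) ≤ φ(z) ≤ (1 + λ)φ(x)`. -/
theorem lfs_comparable_in_shrunken_capsule {d n : ℕ} (hd : 1 ≤ d) (hn : 2 ≤ n)
    (a b v : Fin n → EuclideanSpace ℝ (Fin d))
    (hab : ∀ i, a i ≠ b i)
    (hv : ∀ i, ‖v i‖ = 1)
    (hdir : ∀ i, b i - a i = ‖b i - a i‖ • v i)
    (hdisj : ∀ i j, i ≠ j → Disjoint (segment ℝ (a i) (b i)) (segment ℝ (a j) (b j)))
    (lam : ℝ) (hlam0 : 0 < lam) (hlam1 : lam < 1)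
    (x : EuclideanSpace ℝ (Fin d))
    (z : EuclideanSpace ℝ (Fin d))
    (hz : z ∈ scaleAbout x lam (capsuleFam a b v x (lfs a b x))) :
    (1 - lam) * lfs a b x ≤ lfs a b z ∧ lfs a b z ≤ (1 + lam) * lfs a b x := by
  obtain ⟨y, hyC, hzy⟩ := hz
  have hzx : z - x = lam • (y - x) := by
    have h1 : lam • (y - x) + x = z := by
      simpa [AffineMap.homothety_apply, vsub_eq_sub, vadd_eq_add] using hzy
    rw [← h1]; abel
  have hφ0 : 0 ≤ lfs a b x := lfs_nonneg hn a b x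
  have hbd : ∀ i : Fin n,
      Metric.infDist x (segment ℝ (a i) (b i))
          - lam * max (lfs a b x) (Metric.infDist x (segment ℝ (a i) (b i)))
        ≤ Metric.infDist z (segment ℝ (a i) (b i)) ∧
      Metric.infDist z (segment ℝ (a i) (b i))
        ≤ Metric.infDist x (segment ℝ (a i) (b i))
          + lam * max (lfs a b x) (Metric.infDist x (segment ℝ (a i) (b i))) :=
    fun i => capsule_bound (a i) (b i) (v i) x y z (hab i) (hv i) (hdir i)
      (lfs a b x) lam hφ0 hlam0.le hlam1.le (Set.mem_iInter.1 hyC i) hzx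
  constructor
  · -- lower bound
    refine le_lfs hn fun i j hij => ?_
    have hkey : lfs a b x ≤ Metric.infDist x (segment ℝ (a i) (b i)) ∨
        lfs a b x ≤ Metric.infDist x (segment ℝ (a j) (b j)) := by
      by_contra hcon
      push_neg at hcon
      have hle := lfs_le_mem (a := a) (b := b) (x := x) hn ⟨i, j, hij, rfl⟩
      rcases max_cases (Metric.infDist x (segment ℝ (a i) (b i)))
        (Metric.infDist x (segment ℝ (a j) (b j))) with ⟨hm, _⟩ | ⟨hm, _⟩ <;>
        rw [hm] at hle <;> [exact absurd hle (not_le.2 hcon.1);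
          exact absurd hle (not_le.2 hcon.2)]
    rcases hkey with h | h
    · have h1 := (hbd i).1
      rw [max_eq_right h] at h1
      refine le_trans ?_ (le_max_left _ _)
      exact low_helper h h1 hlam1.le
    · have h1 := (hbd j).1
      rw [max_eq_right h] at h1
      refine le_trans ?_ (le_max_right _ _)
      exact low_helper h h1 hlam1.le
  · -- upper bound
    obtain ⟨i, j, hij, hEq⟩ := lfs_attained hn a b x
    have hDxi : Metric.infDist x (segment ℝ (a i) (b i)) ≤ lfs a b x := by
      rw [hEq]; exact le_max_left _ _
    have hDxj : Metric.infDist x (segment ℝ (a j) (b j)) ≤ lfs a b x := by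
      rw [hEq]; exact le_max_right _ _
    have h2i := (hbd i).2
    have h2j := (hbd j).2
    rw [max_eq_left hDxi] at h2i
    rw [max_eq_left hDxj] at h2j
    have hle := lfs_le_mem (a := a) (b := b) (x := z) hn ⟨i, j, hij, rfl⟩
    have hmax : max (Metric.infDist z (segment ℝ (a i) (b i)))
        (Metric.infDist z (segment ℝ (a j) (b j))) ≤ (1 + lam) * lfs a b x := by
      apply max_le <;> linarith
    linarith
end
end
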